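/- arXiv:2104.00600 — 6 statements merged into one kernel-verified Lean document; each statement's English description precedes it below -/
import Mathlib

section
/- Let G be a graph and let w be a support vertex of G whose set of leaf neighbors is L_G(w) = {v_1, …, v_t} with t ≥ 1. Let H be the induced subgraph of G on V(G) ∖ (L_G(w) ∪ {w}). Suppose every vertex of N_G(w) ∖ L_G(w) is a support vertex of G. Then |𝒟(G)| = (1 + 2^t)·|𝒟(H)| and Σ_{S∈𝒟(G)} |S| = (t + (t+2)·2^{t−1})·|𝒟(H)| + (1 + 2^t)·(Σ_{S∈𝒟(H)} |S|). -/
open scoped Classical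

/-- The family of all dominating sets of `G`, as a `Finset` of `Finset`s. -/
noncomputable def domSets {V : Type*} [Fintype V] (G : SimpleGraph V) :
    Finset (Finset V) :=
  Finset.univ.filter fun S => ∀ v ∉ S, ∃ u ∈ S, G.Adj u v

/-- The average order of a dominating set of `G`. -/
noncomputable def avd {V : Type*} [Fintype V] (G : SimpleGraph V) : ℚ :=
  (∑ S ∈ domSets G, (S.card : ℚ)) / ((domSets G).card : ℚ)

/-- A leaf is a vertex of degree one. -/
noncomputable def IsLeaf {V : Type*} [Fintype V] (G : SimpleGraph V) (v : V) : Prop :=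
  G.degree v = 1

/-- The set of leaf neighbors of `w` in `G`. -/
noncomputable def leafNbrSet {V : Type*} [Fintype V] (G : SimpleGraph V) (w : V) : Set V :=
  {v | G.Adj w v ∧ IsLeaf G v}

/-- A support vertex is a vertex adjacent to at least one leaf. -/
noncomputable def IsSupport {V : Type*} [Fintype V] (G : SimpleGraph V) (w : V) : Prop :=
  ∃ v, G.Adj w v ∧ IsLeaf G v

private lemma sum_powerset_card_aux {α : Type*} [DecidableEq α] (s : Finset α) :
    ∑ A ∈ s.powerset, A.card = s.card * 2 ^ (s.card - 1) := by
  induction s using Finset.induction_on with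
  | empty => simp
  | @insert a s ha ih =>
    have hinj : ∀ A ∈ s.powerset, ∀ B ∈ s.powerset, insert a A = insert a B → A = B := by
      intro A hA B hB h
      have hA' : a ∉ A := fun hc => ha (Finset.mem_powerset.mp hA hc)
      have hB' : a ∉ B := fun hc => ha (Finset.mem_powerset.mp hB hc)
      rw [← Finset.erase_insert hA', ← Finset.erase_insert hB', h]
    have hdisj : Disjoint s.powerset (s.powerset.image (insert a)) := by
      rw [Finset.disjoint_left]
      intro A hA hA'
      obtain ⟨B, _, rfl⟩ := Finset.mem_image.mp hA'
      exact ha (Finset.mem_powerset.mp hA (Finset.mem_insert_self a B))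
    rw [Finset.powerset_insert, Finset.sum_union hdisj, Finset.sum_image hinj, ih]
    have h2 : ∑ A ∈ s.powerset, (insert a A).card = ∑ A ∈ s.powerset, (A.card + 1) := by
      refine Finset.sum_congr rfl fun A hA => ?_
      exact Finset.card_insert_of_notMem fun hc => ha (Finset.mem_powerset.mp hA hc)
    rw [h2, Finset.sum_add_distrib, ih, Finset.sum_const, Finset.card_powerset, smul_eq_mul,
      mul_one, Finset.card_insert_of_notMem ha]
    cases' s.card with m
    · simp
    · simp only [Nat.add_sub_cancel, Nat.succ_sub_one]
      ring

set_option maxHeartbeats 1600000 in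
/-- Let `w` be a support vertex of `G` with exactly `t ≥ 1` leaf neighbors such that every
non-leaf neighbor of `w` is a support vertex, and let `H = G ∖ (L_G(w) ∪ {w})`.  Then
`|𝒟(G)| = (1+2^t)·|𝒟(H)|` and
`Σ_{S∈𝒟(G)}|S| = (t + (t+2)·2^{t−1})·|𝒟(H)| + (1+2^t)·Σ_{S∈𝒟(H)}|S|`. -/
theorem domSets_support_vertex_counts {V : Type*} [Fintype V] (G : SimpleGraph V) (w : V)
    (t : ℕ) (ht : 1 ≤ t) (hcard : (leafNbrSet G w).ncard = t)
    (hsupp : ∀ u ∈ G.neighborSet w \ leafNbrSet G w, IsSupport G u) :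
    (domSets G).card = (1 + 2 ^ t) * (domSets (G.induce ((leafNbrSet G w ∪ {w})ᶜ))).card ∧
      (∑ S ∈ domSets G, S.card) =
        (t + (t + 2) * 2 ^ (t - 1)) * (domSets (G.induce ((leafNbrSet G w ∪ {w})ᶜ))).card +
          (1 + 2 ^ t) * ∑ S ∈ domSets (G.induce ((leafNbrSet G w ∪ {w})ᶜ)), S.card := by
  classical
  set L : Set V := leafNbrSet G w with hLdef
  set sC : Set V := (L ∪ {w})ᶜ with hsdef
  set H : SimpleGraph sC := G.induce sC with hHdef
  -- basic facts
  have honly : ∀ v, IsLeaf G v → ∀ a, G.Adj a v → ∀ b, G.Adj b v → a = b := by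
    intro v hv a hab b hbb
    have hcard1 : (G.neighborFinset v).card ≤ 1 := le_of_eq hv
    exact Finset.card_le_one.mp hcard1 a (by simpa using hab.symm) b (by simpa using hbb.symm)
  have hwnotL : w ∉ L := fun h => G.loopless.irrefl w h.1
  have hmem_s : ∀ x, x ∈ sC ↔ x ∉ L ∧ x ≠ w := by
    intro x
    simp only [hsdef, Set.mem_compl_iff, Set.mem_union, Set.mem_singleton_iff, not_or]
  have hLadj : ∀ v ∈ L, ∀ a, G.Adj a v → a = w := by
    intro v hv a ha
    exact honly v hv.2 a ha w hv.1
  set Lf : Finset V := L.toFinset with hLfdef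
  have hLcard : Lf.card = t := by
    rw [Set.ncard_eq_toFinset_card'] at hcard
    exact hcard
  have hLne : Lf.Nonempty := by
    rw [← Finset.card_pos, hLcard]; omega
  obtain ⟨v1, hv1⟩ := hLne
  have hv1L : v1 ∈ L := Set.mem_toFinset.mp hv1
  have hwLf : w ∉ Lf := fun h => hwnotL (Set.mem_toFinset.mp h)
  have hmem_Lf : ∀ a, a ∈ Lf ↔ a ∈ L := fun a => Set.mem_toFinset
  -- every non-leaf neighbor of w has a private leaf inside sC
  have hkey : ∀ x, G.Adj w x → x ∉ L → ∃ y ∈ sC, G.Adj x y ∧ ∀ z, G.Adj z y → z = x := by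
    intro x hadj hxL
    obtain ⟨y, hxy, hyleaf⟩ := hsupp x ⟨hadj, hxL⟩
    have hyw : y ≠ w := by
      intro h
      have hx1 : x ≠ v1 := fun h' => hxL (h' ▸ hv1L)
      exact hx1 (honly w (h ▸ hyleaf) x (h ▸ hxy) v1 hv1L.1.symm)
    have hyL : y ∉ L := by
      intro hyL
      have hxw : x = w := hLadj y hyL x hxy
      exact G.loopless.irrefl w (hxw ▸ hadj)
    exact ⟨y, (hmem_s y).mpr ⟨hyL, hyw⟩, hxy, fun z hz => honly y hyleaf z hz x hxy⟩
  -- the family of admissible traces on L ∪ {w}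
  set C : Finset (Finset V) := insert Lf ((Lf.powerset).image (insert w)) with hCdef
  have hinjC : ∀ A ∈ Lf.powerset, ∀ B ∈ Lf.powerset, insert w A = insert w B → A = B := by
    intro A hA B hB h
    have hA' : w ∉ A := fun hc => hwLf (Finset.mem_powerset.mp hA hc)
    have hB' : w ∉ B := fun hc => hwLf (Finset.mem_powerset.mp hB hc)
    rw [← Finset.erase_insert hA', ← Finset.erase_insert hB', h]
  have hLfC : Lf ∉ (Lf.powerset).image (insert w) := by
    intro hc
    obtain ⟨A, _, hA⟩ := Finset.mem_image.mp hc
    exact hwLf (hA ▸ Finset.mem_insert_self w A)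
  have hC_cases : ∀ c ∈ C, c = Lf ∨ ∃ A, A ⊆ Lf ∧ c = insert w A := by
    intro c hc
    rcases Finset.mem_insert.mp hc with h | h
    · exact Or.inl h
    · obtain ⟨A, hA, rfl⟩ := Finset.mem_image.mp h
      exact Or.inr ⟨A, Finset.mem_powerset.mp hA, rfl⟩
  have hC_card : C.card = 1 + 2 ^ t := by
    rw [hCdef, Finset.card_insert_of_notMem hLfC,
      Finset.card_image_of_injOn (fun A hA B hB h => hinjC A hA B hB h),
      Finset.card_powerset, hLcard, add_comm]
  have hC_sum : ∑ c ∈ C, c.card = t + (t + 2) * 2 ^ (t - 1) := by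
    rw [hCdef, Finset.sum_insert hLfC, Finset.sum_image hinjC, hLcard]
    have h2 : ∑ A ∈ Lf.powerset, (insert w A).card = ∑ A ∈ Lf.powerset, (A.card + 1) := by
      refine Finset.sum_congr rfl fun A hA => ?_
      exact Finset.card_insert_of_notMem fun hc => hwLf (Finset.mem_powerset.mp hA hc)
    rw [h2, Finset.sum_add_distrib, sum_powerset_card_aux, Finset.sum_const,
      Finset.card_powerset, hLcard, smul_eq_mul, mul_one]
    obtain ⟨m, rfl⟩ : ∃ m, t = m + 1 := ⟨t - 1, (Nat.succ_pred_eq_of_pos ht).symm⟩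
    simp only [Nat.add_sub_cancel]
    ring
  set Kf : Finset V := insert w Lf with hKdef
  have hKf_mem : ∀ a, a ∈ Kf ↔ a ∈ L ∨ a = w := by
    intro a
    rw [hKdef, Finset.mem_insert, hmem_Lf a]
    tauto
  have hs_iff : ∀ a, a ∈ sC ↔ a ∉ Kf := by
    intro a
    rw [hmem_s a, hKf_mem a]
    tauto
  have hC_subKf : ∀ c ∈ C, c ⊆ Kf := by
    intro c hc
    rcases hC_cases c hc with rfl | ⟨A, hA, rfl⟩
    · rw [hKdef]; exact Finset.subset_insert w Lf
    · rw [hKdef]; exact Finset.insert_subset_insert w hA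
  -- the maps
  have hdomG : ∀ S, S ∈ domSets G ↔ ∀ v ∉ S, ∃ u ∈ S, G.Adj u v := by
    intro S; simp [domSets]
  have hdomH : ∀ D : Finset sC, D ∈ domSets H ↔ ∀ x ∉ D, ∃ u ∈ D, H.Adj u x := by
    intro D; simp [domSets]
  have hHadj : ∀ a b : sC, H.Adj a b ↔ G.Adj (a : V) (b : V) := by
    intro a b; rw [hHdef]; simp [SimpleGraph.comap_adj]
  -- forward: traces of dominating sets
  have hg_mem : ∀ S ∈ domSets G,
      (S.subtype (· ∈ sC)) ∈ domSets H ∧ (S ∩ Kf) ∈ C := by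
    intro S hS
    rw [hdomG] at hS
    constructor
    · rw [hdomH]
      intro x hx
      have hxS : (x : V) ∉ S := fun h => hx (Finset.mem_subtype.mpr h)
      obtain ⟨u, huS, hux⟩ := hS (x : V) hxS
      by_cases hus : u ∈ sC
      · exact ⟨⟨u, hus⟩, Finset.mem_subtype.mpr huS, (hHadj ⟨u, hus⟩ x).mpr hux⟩
      · have hx_s := (hmem_s (x : V)).mp x.2
        have hucase : u ∈ L ∨ u = w := by
          have := (hmem_s u).not.mp hus
          tauto
        rcases hucase with huL | huw
        · exact absurd (hLadj u huL (x : V) hux.symm) hx_s.2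
        · rw [huw] at hux
          obtain ⟨y, hys, hxy, hyonly⟩ := hkey (x : V) hux hx_s.1
          have hyS : y ∈ S := by
            by_contra hyS
            obtain ⟨z, hzS, hzy⟩ := hS y hyS
            exact hxS (hyonly z hzy ▸ hzS)
          exact ⟨⟨y, hys⟩, Finset.mem_subtype.mpr hyS, (hHadj ⟨y, hys⟩ x).mpr hxy.symm⟩
    · by_cases hwS : w ∈ S
      · refine Finset.mem_insert.mpr (Or.inr (Finset.mem_image.mpr
          ⟨S ∩ Lf, Finset.mem_powerset.mpr Finset.inter_subset_right, ?_⟩))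
        ext a
        rw [Finset.mem_inter, hKf_mem a, Finset.mem_insert, Finset.mem_inter, hmem_Lf a]
        constructor
        · rintro (h | ⟨haS, h⟩)
          · exact ⟨h ▸ hwS, Or.inr h⟩
          · exact ⟨haS, Or.inl h⟩
        · rintro ⟨haS, h | h⟩
          · exact Or.inr ⟨haS, h⟩
          · exact Or.inl h
      · refine Finset.mem_insert.mpr (Or.inl ?_)
        have hLS : ∀ v ∈ L, v ∈ S := by
          intro v hv
          by_contra hvS
          obtain ⟨u, huS, huv⟩ := hS v hvS
          exact hwS (hLadj v hv u huv ▸ huS)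
        ext a
        rw [Finset.mem_inter, hKf_mem a, hmem_Lf a]
        constructor
        · rintro ⟨haS, h | h⟩
          · exact h
          · exact absurd (h ▸ haS) hwS
        · intro h
          exact ⟨hLS a h, Or.inl h⟩
  -- backward: unions are dominating
  have hf_mem : ∀ (D : Finset sC) (c : Finset V), D ∈ domSets H → c ∈ C →
      (D.image Subtype.val ∪ c) ∈ domSets G := by
    intro D c hD hc
    rw [hdomH] at hD
    rw [hdomG]
    intro v hv
    have hvc : v ∉ c := fun h => hv (Finset.mem_union_right _ h)
    by_cases hvs : v ∈ sC
    · have hvD : (⟨v, hvs⟩ : sC) ∉ D := fun hx =>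
        hv (Finset.mem_union_left _ (Finset.mem_image_of_mem _ hx))
      obtain ⟨u, huD, hu⟩ := hD ⟨v, hvs⟩ hvD
      exact ⟨(u : V), Finset.mem_union_left _ (Finset.mem_image_of_mem _ huD),
        (hHadj u ⟨v, hvs⟩).mp hu⟩
    · have hvcase : v ∈ L ∨ v = w := by
        have := (hmem_s v).not.mp hvs
        tauto
      rcases hC_cases c hc with rfl | ⟨A, hA, rfl⟩
      · rcases hvcase with hvL | hvw
        · exact absurd ((hmem_Lf v).mpr hvL) hvc
        · refine ⟨v1, Finset.mem_union_right _ hv1, ?_⟩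
          rw [hvw]
          exact hv1L.1.symm
      · rcases hvcase with hvL | hvw
        · exact ⟨w, Finset.mem_union_right _ (Finset.mem_insert_self w A), hvL.1⟩
        · rw [hvw] at hvc
          exact absurd (Finset.mem_insert_self w A) hvc
  -- inverse properties
  have hgf : ∀ S : Finset V, (S.subtype (· ∈ sC)).image Subtype.val ∪ (S ∩ Kf) = S := by
    intro S
    ext a
    constructor
    · intro h
      rcases Finset.mem_union.mp h with h1 | h2
      · obtain ⟨x, hx, rfl⟩ := Finset.mem_image.mp h1
        exact Finset.mem_subtype.mp hx
      · exact (Finset.mem_inter.mp h2).1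
    · intro h
      by_cases hK : a ∈ Kf
      · exact Finset.mem_union_right _ (Finset.mem_inter.mpr ⟨h, hK⟩)
      · have ha : a ∈ sC := (hs_iff a).mpr hK
        exact Finset.mem_union_left _
          (Finset.mem_image.mpr ⟨⟨a, ha⟩, Finset.mem_subtype.mpr h, rfl⟩)
  have hfg1 : ∀ (D : Finset sC) (c : Finset V), c ∈ C →
      (D.image Subtype.val ∪ c).subtype (· ∈ sC) = D := by
    intro D c hc
    have hcK := hC_subKf c hc
    ext x
    rw [Finset.mem_subtype]
    constructor
    · intro hx
      rcases Finset.mem_union.mp hx with h1 | h2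
      · obtain ⟨y, hy, hxy⟩ := Finset.mem_image.mp h1
        have : y = x := Subtype.ext hxy
        exact this ▸ hy
      · exact absurd (hcK h2) ((hs_iff (x : V)).mp x.2)
    · intro hx
      exact Finset.mem_union_left _ (Finset.mem_image_of_mem _ hx)
  have hfg2 : ∀ (D : Finset sC) (c : Finset V), c ∈ C →
      (D.image Subtype.val ∪ c) ∩ Kf = c := by
    intro D c hc
    have hcK := hC_subKf c hc
    ext a
    rw [Finset.mem_inter]
    constructor
    · rintro ⟨hu, hK⟩
      rcases Finset.mem_union.mp hu with h1 | h2
      · obtain ⟨x, -, rfl⟩ := Finset.mem_image.mp h1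
        exact absurd hK ((hs_iff _).mp x.2)
      · exact h2
    · intro h
      exact ⟨Finset.mem_union_right _ h, hcK h⟩
  have hfcard : ∀ (D : Finset sC) (c : Finset V), c ∈ C →
      (D.image Subtype.val ∪ c).card = D.card + c.card := by
    intro D c hc
    have hdisj : Disjoint (D.image Subtype.val) c := by
      rw [Finset.disjoint_left]
      intro a ha hac
      obtain ⟨x, -, rfl⟩ := Finset.mem_image.mp ha
      exact ((hs_iff (x : V)).mp x.2) (hC_subKf c hc hac)
    rw [Finset.card_union_of_disjoint hdisj,
      Finset.card_image_of_injective _ Subtype.val_injective]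
  -- assemble the bijection with the product
  have hi : ∀ S ∈ domSets G, (S.subtype (· ∈ sC), S ∩ Kf) ∈ (domSets H) ×ˢ C := by
    intro S hS
    exact Finset.mem_product.mpr ⟨(hg_mem S hS).1, (hg_mem S hS).2⟩
  have hj : ∀ p ∈ (domSets H) ×ˢ C, (p.1.image Subtype.val ∪ p.2) ∈ domSets G := by
    intro p hp
    exact hf_mem p.1 p.2 (Finset.mem_product.mp hp).1 (Finset.mem_product.mp hp).2
  have hbij_card : (domSets G).card = ((domSets H) ×ˢ C).card :=
    Finset.card_bij' (fun S _ => (S.subtype (· ∈ sC), S ∩ Kf))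
      (fun p _ => p.1.image Subtype.val ∪ p.2) hi hj
      (fun S _ => hgf S)
      (fun p hp => Prod.ext (hfg1 p.1 p.2 (Finset.mem_product.mp hp).2)
        (hfg2 p.1 p.2 (Finset.mem_product.mp hp).2))
  have hbij_sum : ∑ S ∈ domSets G, S.card
      = ∑ p ∈ (domSets H) ×ˢ C, (p.1.card + p.2.card) :=
    Finset.sum_bij' (fun S _ => (S.subtype (· ∈ sC), S ∩ Kf))
      (fun p _ => p.1.image Subtype.val ∪ p.2) hi hj
      (fun S _ => hgf S)
      (fun p hp => Prod.ext (hfg1 p.1 p.2 (Finset.mem_product.mp hp).2)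
        (hfg2 p.1 p.2 (Finset.mem_product.mp hp).2))
      (fun S hS => by
        conv_lhs => rw [← hgf S]
        exact hfcard _ _ (hg_mem S hS).2)
  constructor
  · rw [hbij_card, Finset.card_product, hC_card, mul_comm]
  · rw [hbij_sum, Finset.sum_product]
    have hrow : ∀ D ∈ domSets H, ∑ c ∈ C, (D.card + c.card)
        = (1 + 2 ^ t) * D.card + (t + (t + 2) * 2 ^ (t - 1)) := by
      intro D _
      rw [Finset.sum_add_distrib, Finset.sum_const, smul_eq_mul, hC_sum, hC_card]
    rw [Finset.sum_congr rfl hrow, Finset.sum_add_distrib, Finset.sum_const, smul_eq_mul,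
      ← Finset.mul_sum]
    ring
end

section
/- Let G be a graph of order n and let w be a support vertex of G whose set of leaf neighbors is L_G(w) = {v_1, …, v_t} with t ∈ {1, 2}. Let H be the induced subgraph of G on V(G) ∖ (L_G(w) ∪ {w}). Suppose every vertex of N_G(w) ∖ L_G(w) is a support vertex of G. Then 2n·|𝒟(G)| − 3·(Σ_{S∈𝒟(G)} |S|) = (2t+1)·[2(n−1−t)·|𝒟(H)| − 3·(Σ_{S∈𝒟(H)} |S|)]. -/
open scoped Classical

lemma leaf_unique {V : Type*} [Fintype V] {G : SimpleGraph V} {v x y : V}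
    (h : IsLeaf G v) (hx : G.Adj v x) (hy : G.Adj v y) : x = y := by
  obtain ⟨a, ha⟩ := Finset.card_eq_one.mp (h : (G.neighborFinset v).card = 1)
  have hx' : x ∈ G.neighborFinset v := by simpa using hx
  have hy' : y ∈ G.neighborFinset v := by simpa using hy
  rw [ha, Finset.mem_singleton] at hx' hy'
  rw [hx', hy']

lemma sum_powerset_card {V : Type*} [DecidableEq V] (s : Finset V) :
    2 * ∑ B ∈ s.powerset, B.card = s.card * 2 ^ s.card := by
  induction s using Finset.induction_on with
  | empty => simp
  | @insert a s ha ih =>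
    have hdisj : Disjoint s.powerset (s.powerset.image (insert a)) := by
      rw [Finset.disjoint_left]
      intro B hB hB'
      obtain ⟨C, hC, rfl⟩ := Finset.mem_image.mp hB'
      exact ha (Finset.mem_powerset.mp hB (Finset.mem_insert_self a C))
    have hinj : ∀ B ∈ s.powerset, ∀ C ∈ s.powerset, insert a B = insert a C → B = C := by
      intro B hB C hC h
      have hab : a ∉ B := fun hc => ha (Finset.mem_powerset.mp hB hc)
      have hac : a ∉ C := fun hc => ha (Finset.mem_powerset.mp hC hc)
      rw [← Finset.erase_insert hab, ← Finset.erase_insert hac, h]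
    rw [Finset.powerset_insert, Finset.sum_union hdisj, Finset.sum_image hinj]
    have hcard : ∀ B ∈ s.powerset, (insert a B).card = B.card + 1 := by
      intro B hB
      exact Finset.card_insert_of_notMem (fun hc => ha (Finset.mem_powerset.mp hB hc))
    rw [Finset.sum_congr rfl hcard, Finset.sum_add_distrib, Finset.sum_const,
      Finset.card_powerset, Finset.card_insert_of_notMem ha]
    ring_nf
    ring_nf at ih
    omega

/-- Let `w` be a support vertex of `G` with exactly `t ∈ {1,2}` leaf neighbors such that
every non-leaf neighbor of `w` is a support vertex, and let `H = G ∖ (L_G(w) ∪ {w})`.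
Then `2n·|𝒟(G)| − 3·Σ_{S∈𝒟(G)}|S| = (2t+1)·[2(n−1−t)·|𝒟(H)| − 3·Σ_{S∈𝒟(H)}|S|]`. -/
theorem support_vertex_small_t {V : Type*} [Fintype V] (G : SimpleGraph V) (w : V)
    (t : ℕ) (ht : t = 1 ∨ t = 2) (hcard : (leafNbrSet G w).ncard = t)
    (hsupp : ∀ u ∈ G.neighborSet w \ leafNbrSet G w, IsSupport G u) :
    2 * (Fintype.card V : ℤ) * ((domSets G).card : ℤ)
        - 3 * (∑ S ∈ domSets G, (S.card : ℤ)) =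
      (2 * (t : ℤ) + 1) *
        (2 * ((Fintype.card V : ℤ) - 1 - t)
            * ((domSets (G.induce ((leafNbrSet G w ∪ {w})ᶜ))).card : ℤ)
          - 3 * ∑ S ∈ domSets (G.induce ((leafNbrSet G w ∪ {w})ᶜ)), (S.card : ℤ)) := by
  classical
  set s : Set V := (leafNbrSet G w ∪ {w})ᶜ with hsdef
  set H : SimpleGraph ↥s := G.induce s with hH
  set LF : Finset V := Finset.univ.filter (fun v => v ∈ leafNbrSet G w) with hLFdef
  have hmemLF : ∀ x, x ∈ LF ↔ x ∈ leafNbrSet G w := by intro x; simp [hLFdef]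
  have hwL : w ∉ leafNbrSet G w := fun h => G.irrefl h.1
  have hwLF : w ∉ LF := fun h => hwL ((hmemLF w).mp h)
  have hLFcard : LF.card = t := by
    have : leafNbrSet G w = ↑LF := by ext x; simp [hmemLF]
    rw [this, Set.ncard_coe_finset] at hcard
    exact hcard
  have hmem_s : ∀ x, x ∈ s ↔ x ∉ leafNbrSet G w ∧ x ≠ w := by
    intro x; simp [hsdef, not_or]; tauto
  set K : Finset V := insert w LF with hKdef
  have hmemK : ∀ x, x ∈ K ↔ x = w ∨ x ∈ leafNbrSet G w := by
    intro x; simp [hKdef, hmemLF]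
  set validA : Finset (Finset V) :=
    K.powerset.filter (fun A => w ∈ A ∨ LF ⊆ A) with hVAdef
  have hmemVA : ∀ A, A ∈ validA ↔ A ⊆ K ∧ (w ∈ A ∨ LF ⊆ A) := by
    intro A; simp [hVAdef]
  have hmemDG : ∀ S, S ∈ domSets G ↔ ∀ v ∉ S, ∃ u ∈ S, G.Adj u v := by
    intro S; simp [domSets]
  have hmemDH : ∀ S : Finset ↥s, S ∈ domSets H ↔ ∀ v ∉ S, ∃ u ∈ S, H.Adj u v := by
    intro S; simp [domSets]
  have hAdjH : ∀ a b : ↥s, H.Adj a b ↔ G.Adj ↑a ↑b := by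
    intro a b; rw [hH]; simp
  set Φ : Finset ↥s × Finset V → Finset V :=
    (fun p => p.1.image Subtype.val ∪ p.2) with hΦdef
  set P : Finset (Finset ↥s × Finset V) := (domSets H) ×ˢ validA with hPdef
  -- leaves' unique neighbor is w
  have hleaf_nbr : ∀ v ∈ leafNbrSet G w, ∀ x, G.Adj v x → x = w := by
    intro v hv x hx
    exact leaf_unique hv.2 hx hv.1.symm
  have hLFne : LF.Nonempty := by
    rw [← Finset.card_pos, hLFcard]; omega
  have hdomG : ∀ p ∈ P, Φ p ∈ domSets G := by
    rintro ⟨S', A⟩ hp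
    rw [hPdef, Finset.mem_product] at hp
    obtain ⟨hS', hA⟩ := hp
    obtain ⟨hAK, hAw⟩ := (hmemVA A).mp hA
    rw [hmemDG]
    intro x hx
    simp only [hΦdef] at hx
    have hx1 : x ∉ S'.image Subtype.val := fun h => hx (Finset.mem_union_left _ h)
    have hx2 : x ∉ A := fun h => hx (Finset.mem_union_right _ h)
    by_cases hxs : x ∈ s
    · have hnot : (⟨x, hxs⟩ : ↥s) ∉ S' := by
        intro h
        exact hx1 (Finset.mem_image.mpr ⟨_, h, rfl⟩)
      obtain ⟨u, hu, hadj⟩ := (hmemDH S').mp hS' _ hnot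
      exact ⟨↑u, Finset.mem_union_left _ (Finset.mem_image.mpr ⟨u, hu, rfl⟩),
        (hAdjH u ⟨x, hxs⟩).mp hadj⟩
    · rw [hmem_s, not_and_or, not_not, not_ne_iff] at hxs
      rcases hxs with hxL | rfl
      · -- x is a leaf neighbor not in A, so w ∈ A
        have hwA : w ∈ A := by
          rcases hAw with h | h
          · exact h
          · exact absurd (h ((hmemLF x).mpr hxL)) hx2
        exact ⟨w, Finset.mem_union_right _ hwA, hxL.1⟩
      · -- x = w: w ∉ A so LF ⊆ A
        have hLFA : LF ⊆ A := by
          rcases hAw with h | h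
          · exact absurd h hx2
          · exact h
        obtain ⟨v, hv⟩ := hLFne
        exact ⟨v, Finset.mem_union_right _ (hLFA hv), ((hmemLF v).mp hv).1.symm⟩
  -- surjectivity
  have hsurj : ∀ S ∈ domSets G, ∃ p ∈ P, Φ p = S := by
    intro S hS
    rw [hmemDG] at hS
    refine ⟨(S.subtype (· ∈ s), S ∩ K), ?_, ?_⟩
    · rw [hPdef, Finset.mem_product]
      constructor
      · -- the restriction dominates H
        rw [hmemDH]
        intro y hy
        have hyS : ↑y ∉ S := fun h => hy (Finset.mem_subtype.mpr h)
        have hys : (y : V) ∈ s := y.2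
        have hyne : (y : V) ≠ w := ((hmem_s _).mp hys).2
        have hynL : (y : V) ∉ leafNbrSet G w := ((hmem_s _).mp hys).1
        obtain ⟨u, huS, hadj⟩ := hS ↑y hyS
        by_cases hus : u ∈ s
        · exact ⟨⟨u, hus⟩, Finset.mem_subtype.mpr huS, (hAdjH _ _).mpr hadj⟩
        · rw [hmem_s, not_and_or, not_not, not_ne_iff] at hus
          rcases hus with huL | huw
          · exact absurd (hleaf_nbr u huL _ hadj) hyne
          · rw [huw] at huS hadj
            -- u = w : use the support hypothesis
            have hyN : (y : V) ∈ G.neighborSet w \ leafNbrSet G w :=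
              ⟨hadj, hynL⟩
            obtain ⟨l, hadjyl, hleafl⟩ := hsupp _ hyN
            have hly : ∀ x, G.Adj l x → x = ↑y := fun x hx =>
              leaf_unique hleafl hx hadjyl.symm
            have hlS : l ∈ S := by
              by_contra h
              obtain ⟨u', hu'S, hadj'⟩ := hS l h
              rw [hly u' hadj'.symm] at hu'S
              exact hyS hu'S
            have hlnL : l ∉ leafNbrSet G w := by
              intro hc
              exact hyne (hly w hc.1.symm).symm
            have hlnw : l ≠ w := by
              rintro rfl
              obtain ⟨v, hv⟩ := hLFne
              have hvL := (hmemLF v).mp hv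
              have : v = ↑y := leaf_unique hleafl hvL.1 hadjyl.symm
              rw [this] at hvL
              exact hynL hvL
            have hls : l ∈ s := (hmem_s l).mpr ⟨hlnL, hlnw⟩
            exact ⟨⟨l, hls⟩, Finset.mem_subtype.mpr hlS, (hAdjH _ _).mpr hadjyl.symm⟩
      · -- S ∩ K is a valid A
        rw [hmemVA]
        refine ⟨Finset.inter_subset_right, ?_⟩
        by_cases hwS : w ∈ S
        · exact Or.inl (Finset.mem_inter.mpr ⟨hwS, Finset.mem_insert_self _ _⟩)
        · right
          intro v hv
          have hvL := (hmemLF v).mp hv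
          have hvS : v ∈ S := by
            by_contra h
            obtain ⟨u', hu'S, hadj'⟩ := hS v h
            rw [hleaf_nbr v hvL _ hadj'.symm] at hu'S
            exact hwS hu'S
          exact Finset.mem_inter.mpr ⟨hvS, Finset.mem_insert_of_mem hv⟩
    · -- Φ reassembles S
      simp only [hΦdef]
      ext x
      simp only [Finset.mem_union, Finset.mem_image, Finset.mem_inter, Finset.mem_subtype]
      constructor
      · rintro (⟨a, ha, rfl⟩ | ⟨h, _⟩)
        · exact ha
        · exact h
      · intro hxS
        by_cases hxs : x ∈ s
        · exact Or.inl ⟨⟨x, hxs⟩, hxS, rfl⟩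
        · refine Or.inr ⟨hxS, ?_⟩
          rw [hmem_s, not_and_or, not_not, not_ne_iff] at hxs
          rw [hmemK]
          tauto
  -- points of s are outside K
  have hsK : ∀ x : ↥s, (x : V) ∉ K := by
    intro x hc
    have hx := (hmem_s _).mp x.2
    rcases (hmemK _).mp hc with h | h
    · exact hx.2 h
    · exact hx.1 h
  -- recovering the components of Φ
  have key2 : ∀ r ∈ P, r.2 = Φ r ∩ K := by
    intro r hr
    rw [hPdef, Finset.mem_product] at hr
    have hrK : r.2 ⊆ K := ((hmemVA _).mp hr.2).1
    ext x
    simp only [hΦdef, Finset.mem_inter, Finset.mem_union, Finset.mem_image]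
    constructor
    · intro hx
      exact ⟨Or.inr hx, hrK hx⟩
    · rintro ⟨(⟨a, _, rfl⟩ | hx), hK⟩
      · exact absurd hK (hsK a)
      · exact hx
  have key1 : ∀ r ∈ P, ∀ y : ↥s, y ∈ r.1 ↔ (y : V) ∈ Φ r := by
    intro r hr y
    rw [hPdef, Finset.mem_product] at hr
    have hrK : r.2 ⊆ K := ((hmemVA _).mp hr.2).1
    simp only [hΦdef, Finset.mem_union, Finset.mem_image]
    constructor
    · intro hy
      exact Or.inl ⟨y, hy, rfl⟩
    · rintro (⟨a, ha, hay⟩ | hy)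
      · rwa [← Subtype.ext hay]
      · exact absurd (hrK hy) (hsK y)
  have hinj : Set.InjOn Φ ↑P := by
    intro p hp q hq h
    rw [Finset.mem_coe] at hp hq
    have h2 : p.2 = q.2 := by rw [key2 p hp, key2 q hq, h]
    have h1 : p.1 = q.1 := by
      ext y
      rw [key1 p hp, key1 q hq, h]
    exact Prod.ext h1 h2
  have hfcard : ∀ p ∈ P, ((Φ p).card : ℤ) = (p.1.card : ℤ) + p.2.card := by
    intro p hp
    rw [hPdef, Finset.mem_product] at hp
    have hpK : p.2 ⊆ K := ((hmemVA _).mp hp.2).1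
    have hd : Disjoint (p.1.image Subtype.val) p.2 := by
      rw [Finset.disjoint_left]
      rintro x hx hx2
      obtain ⟨a, _, rfl⟩ := Finset.mem_image.mp hx
      exact hsK a (hpK hx2)
    simp only [hΦdef]
    rw [Finset.card_union_of_disjoint hd,
      Finset.card_image_of_injective _ Subtype.val_injective]
    push_cast
    ring
  have hDGeq : domSets G = P.image Φ := by
    apply Finset.Subset.antisymm
    · intro S hS
      obtain ⟨p, hp, hΦp⟩ := hsurj S hS
      exact Finset.mem_image.mpr ⟨p, hp, hΦp⟩
    · intro S hS
      obtain ⟨p, hp, rfl⟩ := Finset.mem_image.mp hS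
      exact hdomG p hp
  have hinj' : ∀ x ∈ P, ∀ y ∈ P, Φ x = Φ y → x = y := by
    intro x hx y hy
    exact hinj (Finset.mem_coe.mpr hx) (Finset.mem_coe.mpr hy)
  have hcardG : ((domSets G).card : ℤ) = ((domSets H).card : ℤ) * validA.card := by
    rw [hDGeq, Finset.card_image_of_injOn hinj, hPdef, Finset.card_product]
    push_cast
    ring
  have hsumG : ∑ S ∈ domSets G, (S.card : ℤ)
      = (validA.card : ℤ) * (∑ S ∈ domSets H, (S.card : ℤ))
        + ((domSets H).card : ℤ) * (∑ A ∈ validA, (A.card : ℤ)) := by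
    rw [hDGeq, Finset.sum_image hinj']
    rw [Finset.sum_congr rfl hfcard, hPdef, Finset.sum_product]
    simp only [Finset.sum_add_distrib, Finset.sum_const, nsmul_eq_mul]
    rw [← Finset.mul_sum]
  -- structure of validA
  have hVAeq : validA = insert LF (LF.powerset.image (insert w)) := by
    ext A
    rw [hmemVA, Finset.mem_insert, Finset.mem_image]
    constructor
    · rintro ⟨hAK, hw | hLFA⟩
      · refine Or.inr ⟨A.erase w, Finset.mem_powerset.mpr ?_, Finset.insert_erase hw⟩
        rw [hKdef] at hAK
        exact Finset.subset_insert_iff.mp hAK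
      · by_cases hw : w ∈ A
        · refine Or.inr ⟨A.erase w, Finset.mem_powerset.mpr ?_, Finset.insert_erase hw⟩
          rw [hKdef] at hAK
          exact Finset.subset_insert_iff.mp hAK
        · left
          rw [hKdef] at hAK
          exact Finset.Subset.antisymm ((Finset.subset_insert_iff_of_notMem hw).mp hAK) hLFA
    · rintro (rfl | ⟨B, hB, rfl⟩)
      · exact ⟨by rw [hKdef]; exact Finset.subset_insert _ _, Or.inr Finset.Subset.rfl⟩
      · refine ⟨?_, Or.inl (Finset.mem_insert_self _ _)⟩
        rw [hKdef]
        exact Finset.insert_subset_insert _ (Finset.mem_powerset.mp hB)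
  have hLFnm : LF ∉ LF.powerset.image (insert w) := by
    rw [Finset.mem_image]
    rintro ⟨B, hB, hBe⟩
    exact hwLF (hBe ▸ Finset.mem_insert_self w B)
  have hinsinj : ∀ B ∈ LF.powerset, ∀ C ∈ LF.powerset, insert w B = insert w C → B = C := by
    intro B hB C hC h
    have hwB : w ∉ B := fun hc => hwLF (Finset.mem_powerset.mp hB hc)
    have hwC : w ∉ C := fun hc => hwLF (Finset.mem_powerset.mp hC hc)
    rw [← Finset.erase_insert hwB, ← Finset.erase_insert hwC, h]
  have hVAcard : (validA.card : ℤ) = 2 ^ t + 1 := by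
    rw [hVAeq, Finset.card_insert_of_notMem hLFnm, Finset.card_image_of_injOn
      (fun x hx y hy => hinsinj x hx y hy), Finset.card_powerset, hLFcard]
    push_cast
    ring
  have hVAsum : 2 * ∑ A ∈ validA, (A.card : ℤ)
      = 2 * t + 2 ^ (t + 1) + t * 2 ^ t := by
    rw [hVAeq, Finset.sum_insert hLFnm, Finset.sum_image
      (fun x hx y hy => hinsinj x hx y hy)]
    have hcins : ∀ B ∈ LF.powerset, ((insert w B).card : ℤ) = (B.card : ℤ) + 1 := by
      intro B hB
      have hwB : w ∉ B := fun hc => hwLF (Finset.mem_powerset.mp hB hc)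
      rw [Finset.card_insert_of_notMem hwB]
      push_cast
      ring
    rw [Finset.sum_congr rfl hcins, Finset.sum_add_distrib, Finset.sum_const,
      Finset.card_powerset, hLFcard]
    have hsp := sum_powerset_card LF
    rw [hLFcard] at hsp
    have hsp' : 2 * (∑ B ∈ LF.powerset, (B.card : ℤ)) = (t : ℤ) * 2 ^ t := by
      have := congrArg (fun n : ℕ => (n : ℤ)) hsp
      push_cast at this
      rw [← this, Finset.mul_sum]
    simp only [nsmul_eq_mul, mul_one]
    have h2 : (2:ℤ) ^ (t + 1) = 2 ^ t * 2 := pow_succ 2 t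
    push_cast
    linarith
  rcases ht with rfl | rfl
  · have ha : (validA.card : ℤ) = 3 := by rw [hVAcard]; norm_num
    have hb : ∑ A ∈ validA, (A.card : ℤ) = 4 := by
      norm_num at hVAsum
      linarith
    rw [hcardG, hsumG, ha, hb]
    push_cast
    ring
  · have ha : (validA.card : ℤ) = 5 := by rw [hVAcard]; norm_num
    have hb : ∑ A ∈ validA, (A.card : ℤ) = 10 := by
      norm_num at hVAsum
      linarith
    rw [hcardG, hsumG, ha, hb]
    push_cast
    ring
end

section
/- Let G be a tree and let v be a vertex of G whose neighborhood is N_G(v) = {v_1, …, v_k, u}, where v_1, …, v_k are leaves of G (k ≥ 1) and u is not a leaf neighbor of v. Let T be the induced subgraph of G on V(G) ∖ ({v, v_1, …, v_k}) and suppose |V(T)| ≥ 2. Then the domination polynomials satisfy D_G(x) = x(x+1)^{k−1}·[D_{G∖L_G(v)}(x) + D_{T∖u}(x)] + x^k·D_T(x), where G∖L_G(v) is the induced subgraph of G on V(G) ∖ {v_1, …, v_k} and T∖u is the induced subgraph on V(T) ∖ {u}. -/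
open scoped Classical

/-- The domination polynomial of `G`, evaluated at `x`. -/
noncomputable def domPoly {V : Type*} [Fintype V] (G : SimpleGraph V) (x : ℚ) : ℚ :=
  ∑ S ∈ domSets G, x ^ S.card


section Aux
variable {V : Type*} [Fintype V] (G : SimpleGraph V)

lemma mem_domSets {S : Finset V} : S ∈ domSets G ↔ ∀ a ∉ S, ∃ b ∈ S, G.Adj b a := by
  simp [domSets]

lemma leaf_unique_nbr {v w : V} (hw : w ∈ leafNbrSet G v) {z : V} (hz : G.Adj z w) : z = v := by
  obtain ⟨hadj, hleaf⟩ := hw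
  have hd : (G.neighborFinset w).card = 1 := hleaf
  obtain ⟨a, ha⟩ := Finset.card_eq_one.1 hd
  have h1 : v ∈ G.neighborFinset w := by
    rw [SimpleGraph.mem_neighborFinset]; exact hadj.symm
  have h2 : z ∈ G.neighborFinset w := by
    rw [SimpleGraph.mem_neighborFinset]; exact hz.symm
  rw [ha, Finset.mem_singleton] at h1 h2
  rw [h2, ← h1]

noncomputable def domFam (s : Set V) : Finset (Finset V) :=
  Finset.univ.filter
    (fun S : Finset V => ↑S ⊆ s ∧ ∀ w ∈ s, w ∉ S → ∃ z ∈ S, G.Adj z w)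

lemma mem_domFam {s : Set V} {S : Finset V} :
    S ∈ domFam G s ↔ (↑S ⊆ s ∧ ∀ w ∈ s, w ∉ S → ∃ z ∈ S, G.Adj z w) := by
  simp [domFam]

lemma domPoly_induce (s : Set V) [Fintype ↥s] (x : ℚ) :
    domPoly (G.induce s) x = ∑ S ∈ domFam G s, x ^ S.card := by
  unfold domPoly domFam
  refine Finset.sum_nbij' (fun S => S.map (Function.Embedding.subtype _))
    (fun S => S.subtype (· ∈ s)) ?_ ?_ ?_ ?_ ?_
  · intro S hS
    rw [mem_domSets] at hS
    simp only [Finset.mem_filter, Finset.mem_univ, true_and]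
    constructor
    · intro a ha
      simp only [Finset.coe_map, Set.mem_image, Finset.mem_coe] at ha
      obtain ⟨b, _, rfl⟩ := ha
      exact b.2
    · intro w hw hwS
      have : (⟨w, hw⟩ : s) ∉ S := by
        intro h
        exact hwS (Finset.mem_map_of_mem _ h)
      obtain ⟨b, hb, hadj⟩ := hS _ this
      exact ⟨b.1, Finset.mem_map_of_mem _ hb, hadj⟩
  · intro S hS
    simp only [Finset.mem_filter, Finset.mem_univ, true_and] at hS
    rw [mem_domSets]
    rintro ⟨a, ha⟩ haS
    have : a ∉ S := by
      intro h
      exact haS (Finset.mem_subtype.2 h)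
    obtain ⟨z, hz, hadj⟩ := hS.2 a ha this
    exact ⟨⟨z, hS.1 hz⟩, Finset.mem_subtype.2 hz, hadj⟩
  · intro S _
    ext a
    simp [Finset.mem_subtype]
  · intro S hS
    simp only [Finset.mem_filter, Finset.mem_univ, true_and] at hS
    ext a
    simp only [Finset.mem_map, Finset.mem_subtype, Function.Embedding.coe_subtype]
    constructor
    · rintro ⟨b, hb, rfl⟩; exact hb
    · intro ha; exact ⟨⟨a, hS.1 ha⟩, ha, rfl⟩
  · intro S _
    rw [Finset.card_map]

end Aux

/-- Let `G` be a tree and `v` a vertex whose neighborhood consists of `k ≥ 1` leaves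
together with one non-leaf neighbor `u`, and let `T = G ∖ (L_G(v) ∪ {v})` have at least
two vertices.  Then
`D_G(x) = x(x+1)^{k−1}·[D_{G∖L_G(v)}(x) + D_{T∖u}(x)] + x^k·D_T(x)`. -/
theorem domPoly_leaf_branch {V : Type*} [Fintype V] (G : SimpleGraph V)
    (htree : G.IsTree) (v u : V) (k : ℕ) (hk : 1 ≤ k)
    (hcard : (leafNbrSet G v).ncard = k)
    (hu : u ∉ leafNbrSet G v)
    (hnbr : G.neighborSet v = leafNbrSet G v ∪ {u})
    (hT : 2 ≤ ((leafNbrSet G v ∪ {v})ᶜ : Set V).ncard) (x : ℚ) :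
    domPoly G x =
      x * (x + 1) ^ (k - 1) *
          (domPoly (G.induce ((leafNbrSet G v)ᶜ)) x +
            domPoly (G.induce ((leafNbrSet G v ∪ {v, u})ᶜ)) x) +
        x ^ k * domPoly (G.induce ((leafNbrSet G v ∪ {v})ᶜ)) x := by
  classical
  -- basic structural facts
  have hadj_v : ∀ w, G.Adj v w ↔ (w ∈ leafNbrSet G v ∨ w = u) := by
    intro w
    rw [← SimpleGraph.mem_neighborSet, hnbr]
    simp [or_comm]
  have hvu : G.Adj v u := (hadj_v u).2 (Or.inr rfl)
  have hvL : v ∉ leafNbrSet G v := fun h => G.irrefl h.1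
  have huv : u ≠ v := fun h => G.irrefl (h ▸ hvu)
  set Lf : Finset V := (leafNbrSet G v).toFinset with hLf
  have mem_Lf : ∀ {a : V}, a ∈ Lf ↔ a ∈ leafNbrSet G v := fun {a} => Set.mem_toFinset
  have hLfcard : Lf.card = k := by
    rw [← hcard]; exact (Set.ncard_eq_toFinset_card' _).symm
  set Ts : Set V := ((leafNbrSet G v ∪ {v})ᶜ : Set V) with hTsdef
  have mem_Ts : ∀ {w : V}, w ∈ Ts ↔ w ∉ leafNbrSet G v ∧ w ≠ v := by
    intro w; rw [hTsdef]; simp only [Set.mem_compl_iff, Set.mem_union, Set.mem_singleton_iff,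
      not_or, and_comm]
  set PA : Finset (Finset V) := Finset.univ.filter
    (fun S : Finset V => ↑S ⊆ Ts ∧ ∀ w ∈ Ts, w ≠ u → w ∉ S → ∃ z ∈ S, G.Adj z w) with hPA
  set DT : Finset (Finset V) := Finset.univ.filter
    (fun S : Finset V => ↑S ⊆ Ts ∧ ∀ w ∈ Ts, w ∉ S → ∃ z ∈ S, G.Adj z w) with hDT
  set P : ℚ := ∑ S ∈ PA, x ^ S.card with hP
  set D : ℚ := ∑ S ∈ DT, x ^ S.card with hD
  set Q : ℚ := ∑ S ∈ DT.filter (fun S => u ∈ S), x ^ S.card with hQ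
  set R : ℚ := ∑ S ∈ PA.filter (fun S => u ∉ S), x ^ S.card with hR
  have hvLf : v ∉ Lf := fun h => hvL (mem_Lf.1 h)
  have h1 : domPoly G x = x * (x + 1) ^ k * P + x ^ k * D := by
    rw [show domPoly G x = ∑ S ∈ domSets G, x ^ S.card from rfl]
    rw [← Finset.sum_filter_add_sum_filter_not (domSets G) (fun S => v ∈ S) (fun S => x ^ S.card)]
    have hps : ∑ A ∈ Lf.powerset, x ^ A.card = (x + 1) ^ k := by
      have hprod := Finset.prod_add (fun _ : V => x) (fun _ : V => (1 : ℚ)) Lf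
      simp only [Finset.prod_const, one_pow, mul_one] at hprod
      rw [hLfcard] at hprod
      exact hprod.symm
    have hA : ∑ S ∈ (domSets G).filter (fun S => v ∈ S), x ^ S.card
        = ∑ p ∈ Lf.powerset ×ˢ PA, x ^ (1 + p.1.card + p.2.card) := by
      refine Finset.sum_nbij' (fun S => (S ∩ Lf, S \ insert v Lf))
        (fun p => insert v (p.1 ∪ p.2)) ?_ ?_ ?_ ?_ ?_
      · intro S hS
        simp only [Finset.mem_filter, mem_domSets] at hS
        obtain ⟨hdom, hvS⟩ := hS
        rw [Finset.mem_product]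
        constructor
        · exact Finset.mem_powerset.2 Finset.inter_subset_right
        · rw [hPA]
          simp only [Finset.mem_filter, Finset.mem_univ, true_and]
          constructor
          · intro a ha
            rw [Finset.coe_sdiff] at ha
            obtain ⟨haS, ha2⟩ := ha
            simp only [Finset.coe_insert, Set.mem_insert_iff, Finset.mem_coe] at ha2
            push_neg at ha2
            exact mem_Ts.2 ⟨fun h => ha2.2 (mem_Lf.2 h), ha2.1⟩
          · intro w hw hwu hwS
            obtain ⟨hwL, hwv⟩ := mem_Ts.1 hw
            have hwS' : w ∉ S := by
              intro h
              exact hwS (Finset.mem_sdiff.2 ⟨h, by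
                simp only [Finset.mem_insert]
                push_neg
                exact ⟨hwv, fun hc => hwL (mem_Lf.1 hc)⟩⟩)
            obtain ⟨z, hz, hadj⟩ := hdom w hwS'
            refine ⟨z, Finset.mem_sdiff.2 ⟨hz, ?_⟩, hadj⟩
            simp only [Finset.mem_insert]
            push_neg
            constructor
            · rintro rfl
              rcases (hadj_v w).1 hadj with h | h
              · exact hwL h
              · exact hwu h
            · intro hc
              exact hwv (leaf_unique_nbr G (mem_Lf.1 hc) hadj.symm)
      · rintro ⟨A, B⟩ hp
        rw [Finset.mem_product] at hp
        obtain ⟨hA, hB⟩ := hp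
        rw [Finset.mem_powerset] at hA
        rw [hPA] at hB
        simp only [Finset.mem_filter, Finset.mem_univ, true_and] at hB
        obtain ⟨hsub, hdom⟩ := hB
        simp only [Finset.mem_filter, mem_domSets]
        refine ⟨?_, Finset.mem_insert_self v _⟩
        intro a haS
        have hav : a ≠ v := fun h => haS (by rw [h]; exact Finset.mem_insert_self v _)
        have haB : a ∉ B := fun h => haS (Finset.mem_insert_of_mem (Finset.mem_union_right _ h))
        by_cases haL : a ∈ leafNbrSet G v
        · exact ⟨v, Finset.mem_insert_self v _, haL.1⟩
        · by_cases hau : a = u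
          · exact ⟨v, Finset.mem_insert_self v _, hau ▸ hvu⟩
          · obtain ⟨z, hz, hadj⟩ := hdom a (mem_Ts.2 ⟨haL, hav⟩) hau haB
            exact ⟨z, Finset.mem_insert_of_mem (Finset.mem_union_right _ hz), hadj⟩
      · intro S hS
        simp only [Finset.mem_filter] at hS
        have hvS := hS.2
        ext a
        simp only [Finset.mem_insert, Finset.mem_union, Finset.mem_inter, Finset.mem_sdiff]
        constructor
        · rintro (rfl | ⟨h, _⟩ | ⟨h, _⟩)
          · exact hvS
          · exact h
          · exact h
        · intro haS
          by_cases h1 : a = v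
          · exact Or.inl h1
          · by_cases h2 : a ∈ Lf
            · exact Or.inr (Or.inl ⟨haS, h2⟩)
            · exact Or.inr (Or.inr ⟨haS, fun hc => hc.elim h1 h2⟩)
      · rintro ⟨A, B⟩ hp
        rw [Finset.mem_product] at hp
        obtain ⟨hA, hB⟩ := hp
        rw [Finset.mem_powerset] at hA
        rw [hPA] at hB
        simp only [Finset.mem_filter, Finset.mem_univ, true_and] at hB
        have hBv : ∀ a ∈ B, a ≠ v := fun a ha => (mem_Ts.1 (hB.1 ha)).2
        have hBL : ∀ a ∈ B, a ∉ Lf := fun a ha h => (mem_Ts.1 (hB.1 ha)).1 (mem_Lf.1 h)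
        have hA' : insert v (A ∪ B) ∩ Lf = A := by
          ext a
          simp only [Finset.mem_inter, Finset.mem_insert, Finset.mem_union]
          constructor
          · rintro ⟨rfl | ha | ha, haL⟩
            · exact absurd haL hvLf
            · exact ha
            · exact absurd haL (hBL a ha)
          · intro ha
            exact ⟨Or.inr (Or.inl ha), hA ha⟩
        have hB' : insert v (A ∪ B) \ insert v Lf = B := by
          ext a
          simp only [Finset.mem_sdiff, Finset.mem_insert, Finset.mem_union]
          constructor
          · rintro ⟨rfl | ha | ha, h2⟩
            · exact absurd (Or.inl rfl) h2
            · exact absurd (Or.inr (hA ha)) h2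
            · exact ha
          · intro ha
            refine ⟨Or.inr (Or.inr ha), ?_⟩
            rintro (rfl | hc)
            · exact hBv a ha rfl
            · exact hBL a ha hc
        simp only [Prod.mk.injEq]
        exact ⟨hA', hB'⟩
      · intro S hS
        simp only [Finset.mem_filter, mem_domSets] at hS
        obtain ⟨hdom, hvS⟩ := hS
        congr 1
        have e1 : (S ∩ insert v Lf).card + (S \ insert v Lf).card = S.card :=
          Finset.card_inter_add_card_sdiff S (insert v Lf)
        have e2 : S ∩ insert v Lf = insert v (S ∩ Lf) := by
          ext a
          simp only [Finset.mem_inter, Finset.mem_insert]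
          constructor
          · rintro ⟨haS, rfl | h⟩
            · exact Or.inl rfl
            · exact Or.inr ⟨haS, h⟩
          · rintro (rfl | ⟨h1, h2⟩)
            · exact ⟨hvS, Or.inl rfl⟩
            · exact ⟨h1, Or.inr h2⟩
        have e3 : (insert v (S ∩ Lf)).card = (S ∩ Lf).card + 1 :=
          Finset.card_insert_of_notMem (fun h => hvLf (Finset.mem_inter.1 h).2)
        rw [e2, e3] at e1
        show S.card = 1 + (S ∩ Lf).card + (S \ insert v Lf).card
        omega
    have hB : ∑ S ∈ (domSets G).filter (fun S => ¬ v ∈ S), x ^ S.card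
        = ∑ B ∈ DT, x ^ (k + B.card) := by
      refine Finset.sum_nbij' (fun S => S \ Lf) (fun B => B ∪ Lf) ?_ ?_ ?_ ?_ ?_
      · intro S hS
        simp only [Finset.mem_filter, mem_domSets] at hS
        obtain ⟨hdom, hvS⟩ := hS
        have hLsub : Lf ⊆ S := by
          intro a ha
          by_contra haS
          obtain ⟨z, hz, hadj⟩ := hdom a haS
          have := leaf_unique_nbr G (mem_Lf.1 ha) hadj
          exact hvS (this ▸ hz)
        rw [hDT]
        simp only [Finset.mem_filter, Finset.mem_univ, true_and]
        constructor
        · intro a ha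
          rw [Finset.coe_sdiff] at ha
          obtain ⟨haS, haL⟩ := ha
          exact mem_Ts.2 ⟨fun h => haL (mem_Lf.2 h), fun h => hvS (h ▸ haS)⟩
        · intro w hw hwS
          obtain ⟨hwL, hwv⟩ := mem_Ts.1 hw
          have hwS' : w ∉ S := fun h =>
            hwS (Finset.mem_sdiff.2 ⟨h, fun hc => hwL (mem_Lf.1 hc)⟩)
          obtain ⟨z, hz, hadj⟩ := hdom w hwS'
          refine ⟨z, Finset.mem_sdiff.2 ⟨hz, fun hc => ?_⟩, hadj⟩
          exact hwv (leaf_unique_nbr G (mem_Lf.1 hc) hadj.symm)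
      · intro B hB
        rw [hDT] at hB
        simp only [Finset.mem_filter, Finset.mem_univ, true_and] at hB
        obtain ⟨hsub, hdom⟩ := hB
        simp only [Finset.mem_filter, mem_domSets]
        constructor
        · intro a haS
          by_cases hav : a = v
          · subst hav
            obtain ⟨w0, hw0⟩ := Finset.card_pos.1 (by rw [hLfcard]; omega : 0 < Lf.card)
            exact ⟨w0, Finset.mem_union_right _ hw0, (mem_Lf.1 hw0).1.symm⟩
          · have haL : a ∉ leafNbrSet G v := fun h =>
              haS (Finset.mem_union_right _ (mem_Lf.2 h))
            have haB : a ∉ B := fun h => haS (Finset.mem_union_left _ h)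
            obtain ⟨z, hz, hadj⟩ := hdom a (mem_Ts.2 ⟨haL, hav⟩) haB
            exact ⟨z, Finset.mem_union_left _ hz, hadj⟩
        · intro h
          rcases Finset.mem_union.1 h with h | h
          · exact (mem_Ts.1 (hsub h)).2 rfl
          · exact hvLf h
      · intro S hS
        simp only [Finset.mem_filter, mem_domSets] at hS
        obtain ⟨hdom, hvS⟩ := hS
        have hLsub : Lf ⊆ S := by
          intro a ha
          by_contra haS
          obtain ⟨z, hz, hadj⟩ := hdom a haS
          have := leaf_unique_nbr G (mem_Lf.1 ha) hadj
          exact hvS (this ▸ hz)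
        exact Finset.sdiff_union_of_subset hLsub
      · intro B hB
        rw [hDT] at hB
        simp only [Finset.mem_filter, Finset.mem_univ, true_and] at hB
        have hdisj : Disjoint B Lf := by
          rw [Finset.disjoint_left]
          intro a ha hc
          exact (mem_Ts.1 (hB.1 ha)).1 (mem_Lf.1 hc)
        show (B ∪ Lf) \ Lf = B
        rw [Finset.union_sdiff_distrib, Finset.sdiff_self, Finset.union_empty,
          Finset.sdiff_eq_self_of_disjoint hdisj]
      · intro S hS
        simp only [Finset.mem_filter, mem_domSets] at hS
        obtain ⟨hdom, hvS⟩ := hS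
        have hLsub : Lf ⊆ S := by
          intro a ha
          by_contra haS
          obtain ⟨z, hz, hadj⟩ := hdom a haS
          have := leaf_unique_nbr G (mem_Lf.1 ha) hadj
          exact hvS (this ▸ hz)
        congr 1
        have h5c := Finset.card_sdiff_of_subset hLsub
        have hle := Finset.card_le_card hLsub
        show S.card = k + (S \ Lf).card
        omega
    rw [hA, hB, Finset.sum_product]
    have hstep : ∀ A ∈ Lf.powerset, ∑ B ∈ PA, x ^ (1 + A.card + B.card)
        = (x * x ^ A.card) * P := by
      intro A _
      rw [hP, Finset.mul_sum]
      refine Finset.sum_congr rfl fun B _ => ?_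
      rw [pow_add, pow_add, pow_one, mul_assoc]
    rw [Finset.sum_congr rfl hstep, ← Finset.sum_mul, ← Finset.mul_sum, hps]
    have hstep2 : ∀ B ∈ DT, x ^ (k + B.card) = x ^ k * x ^ B.card :=
      fun B _ => pow_add x k B.card
    rw [Finset.sum_congr rfl hstep2, ← Finset.mul_sum, ← hD]
  have h2 : domPoly (G.induce ((leafNbrSet G v)ᶜ)) x = x * P + Q := by
    rw [domPoly_induce]
    rw [← Finset.sum_filter_add_sum_filter_not (domFam G ((leafNbrSet G v)ᶜ))
      (fun S => v ∈ S) (fun S => x ^ S.card)]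
    have hA : ∑ S ∈ (domFam G ((leafNbrSet G v)ᶜ)).filter
        (fun S => v ∈ S), x ^ S.card = x * P := by
      rw [hP, Finset.mul_sum]
      refine Finset.sum_nbij' (fun S => S.erase v) (fun B => insert v B) ?_ ?_ ?_ ?_ ?_
      · intro S hS
        rw [Finset.mem_filter, mem_domFam] at hS
        obtain ⟨⟨hsub, hdom⟩, hvS⟩ := hS
        rw [hPA]
        simp only [Finset.mem_filter, Finset.mem_univ, true_and]
        constructor
        · intro a ha
          rw [Finset.coe_erase] at ha
          obtain ⟨haS, hav⟩ := ha
          exact mem_Ts.2 ⟨hsub haS, hav⟩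
        · intro w hw hwu hwS
          obtain ⟨hwL, hwv⟩ := mem_Ts.1 hw
          have hwS' : w ∉ S := fun h => hwS (Finset.mem_erase.2 ⟨hwv, h⟩)
          obtain ⟨z, hz, hadj⟩ := hdom w hwL hwS'
          refine ⟨z, Finset.mem_erase.2 ⟨?_, hz⟩, hadj⟩
          rintro rfl
          rcases (hadj_v w).1 hadj with h | h
          · exact hwL h
          · exact hwu h
      · intro B hB
        rw [hPA] at hB
        simp only [Finset.mem_filter, Finset.mem_univ, true_and] at hB
        obtain ⟨hsub, hdom⟩ := hB
        rw [Finset.mem_filter, mem_domFam]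
        refine ⟨⟨?_, ?_⟩, Finset.mem_insert_self v B⟩
        · intro a ha
          rcases Finset.mem_insert.1 ha with rfl | ha'
          · exact hvL
          · exact (mem_Ts.1 (hsub ha')).1
        · intro w hwL hwS
          by_cases hwu : w = u
          · exact ⟨v, Finset.mem_insert_self v B, hwu ▸ hvu⟩
          · have hwv : w ≠ v := fun h => hwS (h ▸ Finset.mem_insert_self v B)
            have hwB : w ∉ B := fun h => hwS (Finset.mem_insert_of_mem h)
            obtain ⟨z, hz, hadj⟩ := hdom w (mem_Ts.2 ⟨hwL, hwv⟩) hwu hwB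
            exact ⟨z, Finset.mem_insert_of_mem hz, hadj⟩
      · intro S hS
        simp only [Finset.mem_filter] at hS
        exact Finset.insert_erase hS.2
      · intro B hB
        rw [hPA] at hB
        simp only [Finset.mem_filter, Finset.mem_univ, true_and] at hB
        exact Finset.erase_insert (fun h => (mem_Ts.1 (hB.1 h)).2 rfl)
      · intro S hS
        simp only [Finset.mem_filter] at hS
        rw [Finset.card_erase_of_mem hS.2]
        have hc1 : 1 ≤ S.card := Finset.card_pos.2 ⟨v, hS.2⟩
        rw [show S.card = S.card - 1 + 1 from by omega, pow_succ]
        have : S.card - 1 + 1 - 1 = S.card - 1 := by omega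
        rw [this]
        ring
    have hB : (domFam G ((leafNbrSet G v)ᶜ)).filter
        (fun S => ¬ v ∈ S) = DT.filter (fun S => u ∈ S) := by
      rw [hDT]
      ext S
      simp only [Finset.mem_filter, mem_domFam, Finset.mem_univ, true_and, Set.mem_compl_iff]
      constructor
      · rintro ⟨⟨hsub, hdom⟩, hvS⟩
        have huS : u ∈ S := by
          obtain ⟨z, hz, hadj⟩ := hdom v hvL hvS
          rcases (hadj_v z).1 hadj.symm with h | h
          · exact absurd h (hsub hz)
          · exact h ▸ hz
        refine ⟨⟨?_, ?_⟩, huS⟩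
        · intro a ha
          exact mem_Ts.2 ⟨hsub ha, fun h => hvS (h ▸ ha)⟩
        · intro w hw hwS
          exact hdom w (mem_Ts.1 hw).1 hwS
      · rintro ⟨⟨hsub, hdom⟩, huS⟩
        have hvS : v ∉ S := fun h => (mem_Ts.1 (hsub h)).2 rfl
        refine ⟨⟨fun a ha => (mem_Ts.1 (hsub ha)).1, ?_⟩, hvS⟩
        intro w hwL hwS
        by_cases hwv : w = v
        · exact ⟨u, huS, hwv ▸ hvu.symm⟩
        · exact hdom w (mem_Ts.2 ⟨hwL, hwv⟩) hwS
    rw [hA, hB, ← hQ]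
  have h3 : domPoly (G.induce ((leafNbrSet G v ∪ {v, u})ᶜ)) x = R := by
    rw [domPoly_induce, hR, hPA]
    congr 1
    ext S
    simp only [mem_domFam, Finset.mem_filter, Finset.mem_univ, true_and]
    have hmem : ∀ w : V, w ∈ ((leafNbrSet G v ∪ {v, u})ᶜ : Set V) ↔
        (w ∈ Ts ∧ w ≠ u) := by
      intro w
      rw [mem_Ts]
      simp only [Set.mem_compl_iff, Set.mem_union, Set.mem_insert_iff,
        Set.mem_singleton_iff, not_or]
      tauto
    constructor
    · rintro ⟨hsub, hdom⟩
      refine ⟨⟨fun a ha => ((hmem a).1 (hsub ha)).1, ?_⟩, fun hus => ((hmem u).1 (hsub hus)).2 rfl⟩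
      intro w hw hwu hwS
      exact hdom w ((hmem w).2 ⟨hw, hwu⟩) hwS
    · rintro ⟨⟨hsub, hdom⟩, hus⟩
      constructor
      · intro a ha
        exact (hmem a).2 ⟨hsub ha, fun h => hus (h ▸ ha)⟩
      · intro w hw hwS
        obtain ⟨hwTs, hwu⟩ := (hmem w).1 hw
        exact hdom w hwTs hwu hwS
  have h4 : P = Q + R := by
    have hsplit := Finset.sum_filter_add_sum_filter_not PA (fun S => u ∈ S)
      (fun S => x ^ S.card)
    have heq : PA.filter (fun S => u ∈ S) = DT.filter (fun S => u ∈ S) := by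
      rw [hPA, hDT]
      ext S
      simp only [Finset.mem_filter, Finset.mem_univ, true_and]
      constructor
      · rintro ⟨⟨hsub, hdom⟩, hus⟩
        refine ⟨⟨hsub, ?_⟩, hus⟩
        intro w hw hwS
        exact hdom w hw (fun h => hwS (h ▸ hus)) hwS
      · rintro ⟨⟨hsub, hdom⟩, hus⟩
        exact ⟨⟨hsub, fun w hw _ hwS => hdom w hw hwS⟩, hus⟩
    rw [hP, hQ, hR, ← hsplit, heq]
  have h5 : domPoly (G.induce ((leafNbrSet G v ∪ {v})ᶜ)) x = D := by
    rw [domPoly_induce, hD, hDT]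
    congr 1
    ext S
    simp only [mem_domFam, Finset.mem_filter, Finset.mem_univ, true_and, hTsdef]
  rw [h1, h2, h3, h5]
  have hpow : (x + 1) ^ (k - 1) * (x + 1) = (x + 1) ^ k := by
    rw [← pow_succ]; congr 1; omega
  rw [← hpow, h4]; ring
end

section
/- If H is a subgraph of a graph G (that is, V(H) ⊆ V(G) and E(H) ⊆ E(G)), then the number of dominating sets of H is at most the number of dominating sets of G, i.e., |𝒟(H)| ≤ |𝒟(G)|. -/
open scoped Classical

/-- If `H` is a subgraph of `G` (i.e. `V(H) ⊆ V(G)` and `E(H) ⊆ E(G)`), then the number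
of dominating sets of `H` is at most the number of dominating sets of `G`. -/
theorem domSets_card_le_of_subgraph {V : Type*} [Fintype V] (G : SimpleGraph V)
    (H : G.Subgraph) :
    (domSets H.coe).card ≤ (domSets G).card := by
  apply Finset.card_le_card_of_injOn
    (fun S => S.image Subtype.val ∪ Finset.univ.filter (fun v => v ∉ H.verts))
  · intro S hS
    simp only [domSets, Finset.mem_coe, Finset.mem_filter, Finset.mem_univ, true_and] at hS ⊢
    intro v hv
    simp only [Finset.mem_union, Finset.mem_image, Finset.mem_filter, Finset.mem_univ,
      true_and, not_or, not_exists, not_not] at hv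
    obtain ⟨hv1, hv2⟩ := hv
    have hvV : v ∈ H.verts := hv2
    have hvS : (⟨v, hvV⟩ : H.verts) ∉ S := fun h => hv1 ⟨v, hvV⟩ ⟨h, rfl⟩
    obtain ⟨u, huS, hadj⟩ := hS _ hvS
    exact ⟨u.val, Finset.mem_union_left _ (Finset.mem_image_of_mem _ huS), H.adj_sub hadj⟩
  · intro S1 h1 S2 h2 heq
    simp only [] at heq
    ext ⟨v, hv⟩
    constructor <;> intro hmem
    · have : v ∈ S2.image Subtype.val ∪ Finset.univ.filter (fun v => v ∉ H.verts) := by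
        rw [← heq]
        exact Finset.mem_union_left _ (Finset.mem_image_of_mem _ hmem)
      simp only [Finset.mem_union, Finset.mem_image, Finset.mem_filter, Finset.mem_univ,
        true_and] at this
      rcases this with ⟨u, hu, huv⟩ | h
      · exact (Subtype.ext huv : u = ⟨v, hv⟩) ▸ hu
      · exact absurd hv h
    · have : v ∈ S1.image Subtype.val ∪ Finset.univ.filter (fun v => v ∉ H.verts) := by
        rw [heq]
        exact Finset.mem_union_left _ (Finset.mem_image_of_mem _ hmem)
      simp only [Finset.mem_union, Finset.mem_image, Finset.mem_filter, Finset.mem_univ,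
        true_and] at this
      rcases this with ⟨u, hu, huv⟩ | h
      · exact (Subtype.ext huv : u = ⟨v, hv⟩) ▸ hu
      · exact absurd hv h
end

section
/- Let G be a graph with vertex set {w_1, …, w_m} partitioned into a set P of p vertices and a set Q of q vertices (p + q = m), and let G' be the graph obtained from G by attaching exactly one new leaf to each vertex of P and exactly two new leaves to each vertex of Q. Then avd(G') = (2/3)·|V(G')|, where |V(G')| = 2p + 3q. -/
open scoped Classical

/-- `attachLeaves G Q` is the graph obtained from `G` (with vertex type `V`) by attaching
one new leaf `Sum.inr (Sum.inl x)` to every vertex `x : V`, and one further new leaf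
`Sum.inr (Sum.inr x)` to every vertex `x ∈ Q`.  Thus the vertices of `Q` receive exactly
two new leaves and the remaining vertices exactly one. -/
def attachLeaves {V : Type*} (G : SimpleGraph V) (Q : Finset V) :
    SimpleGraph (V ⊕ (V ⊕ {x // x ∈ Q})) :=
  SimpleGraph.fromRel fun a b =>
    match a, b with
    | Sum.inl x, Sum.inl y => G.Adj x y
    | Sum.inl x, Sum.inr (Sum.inl y) => x = y
    | Sum.inl x, Sum.inr (Sum.inr y) => x = y.1
    | _, _ => False

/-! ### Auxiliary machinery -/

lemma AvdAux.adj_leaf1 {V : Type*} (G : SimpleGraph V) (Q : Finset V)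
    (u : V ⊕ (V ⊕ {x // x ∈ Q})) (x : V) :
    (attachLeaves G Q).Adj u (Sum.inr (Sum.inl x)) ↔ u = Sum.inl x := by
  rcases u with y | y | y <;> simp [attachLeaves, SimpleGraph.fromRel_adj, eq_comm]

lemma AvdAux.adj_leaf2 {V : Type*} (G : SimpleGraph V) (Q : Finset V)
    (u : V ⊕ (V ⊕ {x // x ∈ Q})) (y : {x // x ∈ Q}) :
    (attachLeaves G Q).Adj u (Sum.inr (Sum.inr y)) ↔ u = Sum.inl y.1 := by
  rcases u with z | z | z <;> simp [attachLeaves, SimpleGraph.fromRel_adj, eq_comm]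

lemma AvdAux.mem_domSets_attachLeaves {V : Type*} [Fintype V] (G : SimpleGraph V) (Q : Finset V)
    (S : Finset (V ⊕ (V ⊕ {x // x ∈ Q}))) :
    S ∈ domSets (attachLeaves G Q) ↔
      ∀ x : V, Sum.inl x ∈ S ∨
        (Sum.inr (Sum.inl x) ∈ S ∧ ∀ h : x ∈ Q, Sum.inr (Sum.inr ⟨x, h⟩) ∈ S) := by
  simp only [domSets, Finset.mem_filter, Finset.mem_univ, true_and]
  constructor
  · intro hdom x
    by_cases hx : Sum.inl x ∈ S
    · exact Or.inl hx
    refine Or.inr ⟨?_, ?_⟩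
    · by_contra h1
      obtain ⟨u, hu, hadj⟩ := hdom _ h1
      rw [AvdAux.adj_leaf1] at hadj
      exact hx (hadj ▸ hu)
    · intro h
      by_contra h2
      obtain ⟨u, hu, hadj⟩ := hdom _ h2
      rw [AvdAux.adj_leaf2] at hadj
      exact hx (hadj ▸ hu)
  · intro hloc v hv
    match v with
    | Sum.inl x =>
      rcases hloc x with hx | ⟨h1, _⟩
      · exact absurd hx hv
      · exact ⟨Sum.inr (Sum.inl x), h1, ((AvdAux.adj_leaf1 G Q _ x).2 rfl).symm⟩
    | Sum.inr (Sum.inl x) =>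
      rcases hloc x with hx | ⟨h1, _⟩
      · exact ⟨Sum.inl x, hx, (AvdAux.adj_leaf1 G Q _ x).2 rfl⟩
      · exact absurd h1 hv
    | Sum.inr (Sum.inr y) =>
      rcases hloc y.1 with hx | ⟨_, h2⟩
      · exact ⟨Sum.inl y.1, hx, (AvdAux.adj_leaf2 G Q _ y).2 rfl⟩
      · exact absurd (h2 y.2) hv

/-- The 5 admissible local configurations at a vertex with two attached leaves. -/
def AvdAux.cfgT : Finset (Bool × Bool × Bool) :=
  {(true, false, false), (true, true, false), (true, false, true), (true, true, true),
    (false, true, true)}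

/-- The 3 admissible local configurations at a vertex with one attached leaf. -/
def AvdAux.cfgF : Finset (Bool × Bool × Bool) :=
  {(true, false, false), (true, true, false), (false, true, false)}

/-- Number of `true` entries in a configuration. -/
def AvdAux.wt (t : Bool × Bool × Bool) : ℕ := t.1.toNat + t.2.1.toNat + t.2.2.toNat

lemma AvdAux.mem_cfgT (t : Bool × Bool × Bool) :
    t ∈ AvdAux.cfgT ↔ (t.1 = true ∨ (t.2.1 = true ∧ t.2.2 = true)) := by revert t; decide

lemma AvdAux.mem_cfgF (t : Bool × Bool × Bool) :
    t ∈ AvdAux.cfgF ↔ ((t.1 = true ∨ t.2.1 = true) ∧ t.2.2 = false) := by revert t; decide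

lemma AvdAux.card_cfgT : AvdAux.cfgT.card = 5 := by decide
lemma AvdAux.card_cfgF : AvdAux.cfgF.card = 3 := by decide
lemma AvdAux.sum_wt_cfgT : ∑ t ∈ AvdAux.cfgT, AvdAux.wt t = 10 := by decide
lemma AvdAux.sum_wt_cfgF : ∑ t ∈ AvdAux.cfgF, AvdAux.wt t = 4 := by decide

/-- The admissible local configurations at `x`. -/
noncomputable def AvdAux.cfg {V : Type*} (Q : Finset V) (x : V) : Finset (Bool × Bool × Bool) :=
  if x ∈ Q then AvdAux.cfgT else AvdAux.cfgF

/-- Encode a set of vertices of `attachLeaves G Q` as a family of local configurations. -/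
noncomputable def AvdAux.enc {V : Type*} (Q : Finset V)
    (S : Finset (V ⊕ (V ⊕ {x // x ∈ Q}))) : V → Bool × Bool × Bool := fun x =>
  (decide (Sum.inl x ∈ S), decide (Sum.inr (Sum.inl x) ∈ S),
    decide (∃ h : x ∈ Q, Sum.inr (Sum.inr ⟨x, h⟩) ∈ S))

/-- Decode a family of local configurations back into a set of vertices. -/
noncomputable def AvdAux.dec {V : Type*} [Fintype V] (Q : Finset V)
    (f : V → Bool × Bool × Bool) : Finset (V ⊕ (V ⊕ {x // x ∈ Q})) :=
  Finset.univ.filter fun w =>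
    match w with
    | Sum.inl x => (f x).1 = true
    | Sum.inr (Sum.inl x) => (f x).2.1 = true
    | Sum.inr (Sum.inr y) => (f y.1).2.2 = true

namespace AvdAux

variable {V : Type*} [Fintype V] (Q : Finset V)

lemma mem_dec_l (f : V → Bool × Bool × Bool) (x : V) :
    Sum.inl x ∈ dec Q f ↔ (f x).1 = true := by simp [dec]

lemma mem_dec_rl (f : V → Bool × Bool × Bool) (x : V) :
    Sum.inr (Sum.inl x) ∈ dec Q f ↔ (f x).2.1 = true := by simp [dec]

lemma mem_dec_rr (f : V → Bool × Bool × Bool) (y : {x // x ∈ Q}) :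
    Sum.inr (Sum.inr y) ∈ dec Q f ↔ (f y.1).2.2 = true := by simp [dec]

lemma dec_enc (S : Finset (V ⊕ (V ⊕ {x // x ∈ Q}))) :
    dec Q (enc Q S) = S := by
  ext w
  match w with
  | Sum.inl x => simp [mem_dec_l, enc]
  | Sum.inr (Sum.inl x) => simp [mem_dec_rl, enc]
  | Sum.inr (Sum.inr y) =>
    rw [mem_dec_rr]
    simp only [enc, decide_eq_true_eq]
    constructor
    · rintro ⟨h, hm⟩; exact hm
    · intro hm; exact ⟨y.2, hm⟩

lemma enc_dec (f : V → Bool × Bool × Bool)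
    (hf : f ∈ Fintype.piFinset (cfg Q)) : enc Q (dec Q f) = f := by
  funext x
  have hfx := Fintype.mem_piFinset.1 hf x
  refine Prod.ext ?_ (Prod.ext ?_ ?_)
  · simp [enc, mem_dec_l]
  · simp [enc, mem_dec_rl]
  · simp only [enc]
    by_cases hx : x ∈ Q
    · have h : (∃ h : x ∈ Q, Sum.inr (Sum.inr ⟨x, h⟩) ∈ dec Q f) ↔ (f x).2.2 = true := by
        constructor
        · rintro ⟨h, hm⟩; exact (mem_dec_rr Q f ⟨x, h⟩).1 hm
        · intro hm; exact ⟨hx, (mem_dec_rr Q f ⟨x, hx⟩).2 hm⟩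
      simp [h]
    · have h2 : (f x).2.2 = false := by
        rw [cfg, if_neg hx] at hfx
        exact (mem_cfgF _).1 hfx |>.2
      simp [hx, h2]

lemma enc_mem (S : Finset (V ⊕ (V ⊕ {x // x ∈ Q})))
    (hS : ∀ x : V, Sum.inl x ∈ S ∨
        (Sum.inr (Sum.inl x) ∈ S ∧ ∀ h : x ∈ Q, Sum.inr (Sum.inr ⟨x, h⟩) ∈ S)) :
    enc Q S ∈ Fintype.piFinset (cfg Q) := by
  rw [Fintype.mem_piFinset]
  intro x
  rw [cfg]
  by_cases hx : x ∈ Q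
  · rw [if_pos hx, mem_cfgT]
    rcases hS x with h | ⟨h1, h2⟩
    · left; simpa [enc]
    · right
      constructor
      · simpa [enc]
      · simp only [enc, decide_eq_true_eq]
        exact ⟨hx, h2 hx⟩
  · rw [if_neg hx, mem_cfgF]
    constructor
    · rcases hS x with h | ⟨h1, _⟩
      · left; simpa [enc]
      · right; simpa [enc]
    · simp [enc, hx]

lemma dec_mem (f : V → Bool × Bool × Bool) (hf : f ∈ Fintype.piFinset (cfg Q)) :
    ∀ x : V, Sum.inl x ∈ dec Q f ∨
      (Sum.inr (Sum.inl x) ∈ dec Q f ∧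
        ∀ h : x ∈ Q, Sum.inr (Sum.inr ⟨x, h⟩) ∈ dec Q f) := by
  intro x
  have hfx := Fintype.mem_piFinset.1 hf x
  rw [cfg] at hfx
  by_cases hx : x ∈ Q
  · rw [if_pos hx, mem_cfgT] at hfx
    rcases hfx with h | ⟨h1, h2⟩
    · exact Or.inl ((mem_dec_l Q f x).2 h)
    · exact Or.inr ⟨(mem_dec_rl Q f x).2 h1, fun h => (mem_dec_rr Q f ⟨x, h⟩).2 h2⟩
  · rw [if_neg hx, mem_cfgF] at hfx
    rcases hfx.1 with h | h
    · exact Or.inl ((mem_dec_l Q f x).2 h)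
    · exact Or.inr ⟨(mem_dec_rl Q f x).2 h, fun hq => absurd hq hx⟩

lemma card_eq_sum_wt_enc (S : Finset (V ⊕ (V ⊕ {x // x ∈ Q}))) :
    S.card = ∑ x : V, wt (enc Q S x) := by
  have h1 : S.card = ∑ v : V ⊕ (V ⊕ {x // x ∈ Q}), if v ∈ S then 1 else 0 := by
    rw [← Finset.sum_filter, Finset.sum_const, smul_eq_mul, mul_one]
    congr 1
    ext v; simp
  have h3 : ∑ y : {x // x ∈ Q}, (if Sum.inr (Sum.inr y) ∈ S then 1 else 0)
      = ∑ x : V, (decide (∃ h : x ∈ Q, Sum.inr (Sum.inr ⟨x, h⟩) ∈ S)).toNat := by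
    rw [Finset.univ_eq_attach]
    calc ∑ y ∈ Q.attach, (if Sum.inr (Sum.inr y) ∈ S then 1 else 0)
        = ∑ y ∈ Q.attach, (fun x : V =>
            (decide (∃ h : x ∈ Q, Sum.inr (Sum.inr ⟨x, h⟩) ∈ S)).toNat) y.1 := by
          refine Finset.sum_congr rfl fun y _ => ?_
          have hiff : (∃ h : (y : V) ∈ Q, Sum.inr (Sum.inr ⟨(y : V), h⟩) ∈ S)
              ↔ Sum.inr (Sum.inr y) ∈ S :=
            ⟨fun ⟨_, hm⟩ => hm, fun hm => ⟨y.2, hm⟩⟩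
          by_cases hm : Sum.inr (Sum.inr y) ∈ S <;> simp [hm, hiff]
      _ = ∑ x ∈ Q, (fun x : V =>
            (decide (∃ h : x ∈ Q, Sum.inr (Sum.inr ⟨x, h⟩) ∈ S)).toNat) x :=
          Finset.sum_attach Q (fun x : V =>
            (decide (∃ h : x ∈ Q, Sum.inr (Sum.inr ⟨x, h⟩) ∈ S)).toNat)
      _ = ∑ x : V, (decide (∃ h : x ∈ Q, Sum.inr (Sum.inr ⟨x, h⟩) ∈ S)).toNat := by
          refine Finset.sum_subset (Finset.subset_univ Q) fun x _ hx => ?_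
          simp [hx]
  have hwt : ∀ x : V, wt (enc Q S x)
      = (if Sum.inl x ∈ S then 1 else 0) + (if Sum.inr (Sum.inl x) ∈ S then 1 else 0)
        + (decide (∃ h : x ∈ Q, Sum.inr (Sum.inr ⟨x, h⟩) ∈ S)).toNat := by
    intro x
    by_cases hA : Sum.inl x ∈ S <;> by_cases hB : Sum.inr (Sum.inl x) ∈ S <;>
      simp [wt, enc, hA, hB]
  rw [h1, Fintype.sum_sum_type, Fintype.sum_sum_type, h3]
  simp only [hwt, Finset.sum_add_distrib]
  omega

/-- Sum of a coordinate function over `piFinset`. -/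
lemma sum_piFinset_coord {ι : Type*} [Fintype ι] {α : Type*} [DecidableEq α]
    (t : ι → Finset α) (i : ι) (w : α → ℕ) :
    ∑ f ∈ Fintype.piFinset t, w (f i)
      = (∑ a ∈ t i, w a) * ∏ j ∈ Finset.univ.erase i, (t j).card := by
  classical
  have hmap : ∀ f ∈ Fintype.piFinset t, f i ∈ t i := fun f hf => Fintype.mem_piFinset.1 hf i
  rw [← Finset.sum_fiberwise_of_maps_to' hmap w, Finset.sum_mul]
  refine Finset.sum_congr rfl fun a ha => ?_
  have hfil : (Fintype.piFinset t).filter (fun f => f i = a)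
      = Fintype.piFinset (Function.update t i {a}) := by
    ext f
    simp only [Finset.mem_filter, Fintype.mem_piFinset]
    constructor
    · rintro ⟨hmem, hfi⟩ j
      by_cases hj : j = i
      · subst hj; simp [hfi]
      · simp [Function.update_of_ne hj, hmem j]
    · intro h
      have hfi : f i = a := by simpa using h i
      refine ⟨fun j => ?_, hfi⟩
      by_cases hj : j = i
      · subst hj; rw [hfi]; exact ha
      · simpa [Function.update_of_ne hj] using h j
  rw [hfil, Finset.sum_const, smul_eq_mul, Fintype.card_piFinset, mul_comm]
  congr 1
  rw [← Finset.prod_erase_mul Finset.univ (fun j => (Function.update t i {a} j).card)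
    (Finset.mem_univ i), Function.update_self, Finset.card_singleton, mul_one]
  refine Finset.prod_congr rfl fun j hj => ?_
  rw [Function.update_of_ne (Finset.mem_erase.1 hj).1]

end AvdAux

/-- If the vertex set of `G` is partitioned into `P` of size `p` and `Q` of size `q`, and
`G'` is obtained from `G` by attaching one new leaf to each vertex of `P` and two new
leaves to each vertex of `Q`, then `|V(G')| = 2p + 3q` and `avd(G') = (2/3)·|V(G')|`. -/
theorem avd_attachLeaves {V : Type*} [Fintype V] (G : SimpleGraph V)
    (P Q : Finset V) (hunion : P ∪ Q = Finset.univ) (hdisj : Disjoint P Q)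
    (p q : ℕ) (hp : P.card = p) (hq : Q.card = q) :
    Fintype.card (V ⊕ (V ⊕ {x // x ∈ Q})) = 2 * p + 3 * q ∧
      avd (attachLeaves G Q) =
        2 * (Fintype.card (V ⊕ (V ⊕ {x // x ∈ Q})) : ℚ) / 3 := by
  open AvdAux in
  have hV : Fintype.card V = p + q := by
    rw [← hp, ← hq, ← Finset.card_union_of_disjoint hdisj, hunion, Finset.card_univ]
  have hQ' : Fintype.card {x // x ∈ Q} = q := by
    rw [Fintype.card_coe, hq]
  have hcardW : Fintype.card (V ⊕ (V ⊕ {x // x ∈ Q})) = 2 * p + 3 * q := by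
    rw [Fintype.card_sum, Fintype.card_sum, hV, hQ']; ring
  refine ⟨hcardW, ?_⟩
  set D := domSets (attachLeaves G Q) with hD
  -- transfer card and sum through the bijection enc/dec
  have henc : ∀ S ∈ D, enc Q S ∈ Fintype.piFinset (cfg Q) := fun S hS =>
    enc_mem Q S ((mem_domSets_attachLeaves G Q S).1 hS)
  have hdec : ∀ f ∈ Fintype.piFinset (cfg Q), dec Q f ∈ D := fun f hf =>
    (mem_domSets_attachLeaves G Q (dec Q f)).2 (dec_mem Q f hf)
  have hcardD : D.card = (Fintype.piFinset (cfg Q)).card :=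
    Finset.card_bij' (fun S _ => enc Q S) (fun f _ => dec Q f) henc hdec
      (fun S _ => dec_enc Q S) (fun f hf => enc_dec Q f hf)
  have hsumD : ∑ S ∈ D, S.card = ∑ f ∈ Fintype.piFinset (cfg Q), ∑ x : V, wt (f x) :=
    Finset.sum_bij' (fun S _ => enc Q S) (fun f _ => dec Q f) henc hdec
      (fun S _ => dec_enc Q S) (fun f hf => enc_dec Q f hf)
      (fun S _ => card_eq_sum_wt_enc Q S)
  have hsum2 : ∑ f ∈ Fintype.piFinset (cfg Q), ∑ x : V, wt (f x)
      = ∑ x : V, (∑ a ∈ cfg Q x, wt a) * ∏ j ∈ Finset.univ.erase x, (cfg Q j).card := by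
    rw [Finset.sum_comm]
    exact Finset.sum_congr rfl fun x _ => sum_piFinset_coord (cfg Q) x wt
  -- pass to ℚ
  set N : ℚ := ((∏ x : V, (cfg Q x).card : ℕ) : ℚ) with hNdef
  have hcx : ∀ x : V, ((cfg Q x).card : ℚ) = if x ∈ Q then 5 else 3 := by
    intro x
    by_cases hx : x ∈ Q <;> simp [cfg, hx, card_cfgT, card_cfgF]
  have hNne : N ≠ 0 := by
    rw [hNdef]
    push_cast
    refine Finset.prod_ne_zero_iff.2 fun x _ => ?_
    rw [hcx x]
    split <;> norm_num
  have key : ∀ x : V, ((∑ a ∈ cfg Q x, wt a : ℕ) : ℚ)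
      * ((∏ j ∈ Finset.univ.erase x, (cfg Q j).card : ℕ) : ℚ)
      = (if x ∈ Q then (2 : ℚ) else 4/3) * N := by
    intro x
    have he : ((∏ j ∈ Finset.univ.erase x, (cfg Q j).card : ℕ) : ℚ) * ((cfg Q x).card : ℚ)
        = N := by
      rw [hNdef]
      push_cast
      exact_mod_cast congrArg (Nat.cast : ℕ → ℚ)
        (Finset.prod_erase_mul Finset.univ _ (Finset.mem_univ x))
    by_cases hx : x ∈ Q
    · have hs : (∑ a ∈ cfg Q x, wt a) = 10 := by rw [cfg, if_pos hx, sum_wt_cfgT]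
      have hc : ((cfg Q x).card : ℚ) = 5 := by rw [hcx x, if_pos hx]
      rw [hs, if_pos hx]
      rw [hc] at he
      push_cast only [Nat.cast_ofNat]
      linarith
    · have hs : (∑ a ∈ cfg Q x, wt a) = 4 := by rw [cfg, if_neg hx, sum_wt_cfgF]
      have hc : ((cfg Q x).card : ℚ) = 3 := by rw [hcx x, if_neg hx]
      rw [hs, if_neg hx]
      rw [hc] at he
      push_cast only [Nat.cast_ofNat]
      linarith
  have havg : avd (attachLeaves G Q) = ∑ x : V, (if x ∈ Q then (2 : ℚ) else 4/3) := by
    rw [avd, ← hD]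
    have hnum : (∑ S ∈ D, (S.card : ℚ))
        = ∑ x : V, (if x ∈ Q then (2 : ℚ) else 4/3) * N := by
      rw [← Nat.cast_sum, hsumD, hsum2, Nat.cast_sum]
      exact Finset.sum_congr rfl fun x _ => by rw [Nat.cast_mul]; exact key x
    have hden : ((D.card : ℕ) : ℚ) = N := by
      rw [hcardD, Fintype.card_piFinset, hNdef]
    rw [hnum, hden, ← Finset.sum_mul, mul_div_assoc, div_self hNne, mul_one]
  rw [havg, hcardW]
  have hsplit : ∑ x : V, (if x ∈ Q then (2 : ℚ) else 4/3)
      = ∑ x ∈ P, (if x ∈ Q then (2 : ℚ) else 4/3) + ∑ x ∈ Q, (if x ∈ Q then (2 : ℚ) else 4/3) := by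
    rw [← Finset.sum_union hdisj, hunion]
  rw [hsplit]
  have h1 : ∑ x ∈ P, (if x ∈ Q then (2 : ℚ) else 4/3) = p * (4/3) := by
    rw [Finset.sum_congr rfl fun x hx => if_neg (Finset.disjoint_left.1 hdisj hx),
      Finset.sum_const, hp, nsmul_eq_mul]
  have h2 : ∑ x ∈ Q, (if x ∈ Q then (2 : ℚ) else 4/3) = q * 2 := by
    rw [Finset.sum_congr rfl fun x hx => if_pos hx, Finset.sum_const, hq, nsmul_eq_mul]
  rw [h1, h2]
  push_cast
  ring
end

section
/- For every integer k ≥ 1, the star graph K_{1,k} satisfies avd(K_{1,k}) ≤ 2(k+1)/3, with equality if and only if k ∈ {1, 2}. -/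
open scoped Classical

private lemma two_mul_sum_card {α : Type*} [DecidableEq α] (s : Finset α) :
    2 * ∑ T ∈ s.powerset, (T.card : ℚ) = s.card * 2 ^ s.card := by
  induction s using Finset.induction_on with
  | empty => simp
  | @insert a s ha ih =>
    rw [Finset.sum_powerset_insert ha]
    have h2 : ∑ T ∈ s.powerset, ((insert a T).card : ℚ)
        = ∑ T ∈ s.powerset, ((T.card : ℚ) + 1) := by
      refine Finset.sum_congr rfl fun T hT => ?_
      rw [Finset.card_insert_of_notMem fun h => ha (Finset.mem_powerset.mp hT h)]
      push_cast; ring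
    rw [h2, Finset.sum_add_distrib, Finset.sum_const, Finset.card_powerset,
      Finset.card_insert_of_notMem ha]
    push_cast [nsmul_eq_mul]
    linear_combination 2 * ih

private lemma star_domSets {k : ℕ} (hk : 1 ≤ k) :
    domSets (completeBipartiteGraph Unit (Fin k)) =
      insert (Finset.univ.erase (Sum.inl ()))
        (((Finset.univ.erase (Sum.inl () : Unit ⊕ Fin k)).powerset).image
          (insert (Sum.inl ()))) := by
  set c : Unit ⊕ Fin k := Sum.inl () with hc
  ext S
  simp only [domSets, Finset.mem_filter, Finset.mem_univ, true_and,
    Finset.mem_insert, Finset.mem_image, Finset.mem_powerset]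
  constructor
  · intro hS
    by_cases hcS : c ∈ S
    · exact Or.inr ⟨S.erase c, Finset.erase_subset_erase c (Finset.subset_univ S),
        Finset.insert_erase hcS⟩
    · left
      ext v
      simp only [Finset.mem_erase, Finset.mem_univ, and_true]
      constructor
      · rintro hvS rfl; exact hcS hvS
      · intro hvc
        by_contra hvS
        obtain ⟨u, huS, hadj⟩ := hS v hvS
        rcases v with v | i
        · exact hvc rfl
        · rcases u with u | j
          · exact hcS huS
          · simp [completeBipartiteGraph] at hadj
  · rintro (rfl | ⟨T, hT, rfl⟩)
    · intro v hv
      have hvc : v = c := by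
        by_contra h
        exact hv (Finset.mem_erase.mpr ⟨h, Finset.mem_univ v⟩)
      refine ⟨Sum.inr ⟨0, hk⟩, Finset.mem_erase.mpr ⟨by simp [hc], Finset.mem_univ _⟩, ?_⟩
      subst hvc
      simp [completeBipartiteGraph, hc]
    · intro v hv
      have hvc : v ≠ c := fun h => hv (h ▸ Finset.mem_insert_self c T)
      rcases v with v | i
      · exact absurd (by simp [hc]) hvc
      · exact ⟨c, Finset.mem_insert_self c T, by simp [completeBipartiteGraph, hc]⟩

/-- For every `k ≥ 1`, the star `K_{1,k}` satisfies `avd(K_{1,k}) ≤ 2(k+1)/3`, with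
equality if and only if `k ∈ {1, 2}`. -/
theorem avd_star {k : ℕ} (hk : 1 ≤ k) :
    avd (completeBipartiteGraph Unit (Fin k)) ≤ 2 * ((k : ℚ) + 1) / 3 ∧
      (avd (completeBipartiteGraph Unit (Fin k)) = 2 * ((k : ℚ) + 1) / 3 ↔
        k = 1 ∨ k = 2) := by
  classical
  set c : Unit ⊕ Fin k := Sum.inl () with hc
  set L : Finset (Unit ⊕ Fin k) := Finset.univ.erase c with hL
  have hLcard : L.card = k := by
    rw [hL, Finset.card_erase_of_mem (Finset.mem_univ c), Finset.card_univ]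
    simp
  have hnot : ∀ T ∈ L.powerset, c ∉ T := fun T hT h =>
    Finset.notMem_erase c _ (Finset.mem_powerset.mp hT h)
  have hinj : ∀ T₁ ∈ L.powerset, ∀ T₂ ∈ L.powerset,
      insert c T₁ = insert c T₂ → T₁ = T₂ := by
    intro T₁ h₁ T₂ h₂ h
    have := congrArg (fun s => Finset.erase s c) h
    simpa [Finset.erase_insert (hnot T₁ h₁), Finset.erase_insert (hnot T₂ h₂)] using this
  have hLni : L ∉ L.powerset.image (insert c) := by
    rw [Finset.mem_image]
    rintro ⟨T, hT, hTe⟩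
    have hcmem : c ∈ L := by rw [← hTe]; exact Finset.mem_insert_self c T
    rw [hL] at hcmem
    exact Finset.notMem_erase c Finset.univ hcmem
  set Ssum : ℚ := ∑ T ∈ L.powerset, (T.card : ℚ) with hSsum
  set y : ℚ := (2 : ℚ) ^ k with hy
  have h2S : 2 * Ssum = k * y := by
    rw [hSsum, two_mul_sum_card L, hLcard, hy]
  have hcard : ((domSets (completeBipartiteGraph Unit (Fin k))).card : ℚ) = y + 1 := by
    rw [star_domSets hk, Finset.card_insert_of_notMem hLni,
      Finset.card_image_of_injOn (fun T₁ h₁ T₂ h₂ => hinj T₁ h₁ T₂ h₂),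
      Finset.card_powerset, hLcard]
    push_cast [hy]; ring
  have hsum : ∑ S ∈ domSets (completeBipartiteGraph Unit (Fin k)), (S.card : ℚ)
      = k + Ssum + y := by
    rw [star_domSets hk, Finset.sum_insert hLni, Finset.sum_image hinj, hLcard]
    have h2 : ∑ T ∈ L.powerset, ((insert c T).card : ℚ)
        = ∑ T ∈ L.powerset, ((T.card : ℚ) + 1) := by
      refine Finset.sum_congr rfl fun T hT => ?_
      rw [Finset.card_insert_of_notMem (hnot T hT)]
      push_cast; ring
    rw [h2, Finset.sum_add_distrib, Finset.sum_const, Finset.card_powerset, hLcard]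
    push_cast [nsmul_eq_mul, hy]
    ring
  have hy0 : (0 : ℚ) < y := by positivity
  have hy1 : y + 1 ≠ 0 := by positivity
  have havd : avd (completeBipartiteGraph Unit (Fin k)) = (k + Ssum + y) / (y + 1) := by
    rw [avd, hsum, hcard]
  have hyk : y = ((2 ^ k : ℕ) : ℚ) := by push_cast [hy]; ring
  have hy2 : (2 : ℚ) ≤ y := by
    rw [hyk]
    exact_mod_cast Nat.one_lt_two_pow_iff.mpr (by omega)
  have key : 2 * ((k : ℚ) + 1) / 3 - avd (completeBipartiteGraph Unit (Fin k))
      = ((k : ℚ) - 2) * (y - 2) / (6 * (y + 1)) := by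
    have hS : Ssum = k * y / 2 := by linarith
    rw [havd, hS]
    field_simp
    ring
  have hnum : 0 ≤ ((k : ℚ) - 2) * (y - 2) := by
    rcases eq_or_lt_of_le hk with h1 | h2
    · have : y = 2 := by
        rw [hyk, ← h1]; norm_num
      rw [this]; norm_num
    · have hk2 : (2 : ℚ) ≤ (k : ℚ) := by exact_mod_cast h2
      nlinarith
  constructor
  · have h0 : 0 ≤ ((k : ℚ) - 2) * (y - 2) / (6 * (y + 1)) :=
      div_nonneg hnum (by positivity)
    linarith
  · have hiff : avd (completeBipartiteGraph Unit (Fin k)) = 2 * ((k : ℚ) + 1) / 3 ↔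
        ((k : ℚ) - 2) * (y - 2) = 0 := by
      constructor
      · intro h
        have : ((k : ℚ) - 2) * (y - 2) / (6 * (y + 1)) = 0 := by linarith
        field_simp at this
        rwa [mul_zero] at this
      · intro h
        have : ((k : ℚ) - 2) * (y - 2) / (6 * (y + 1)) = 0 := by
          rw [h]; simp
        linarith
    rw [hiff, mul_eq_zero, sub_eq_zero, sub_eq_zero]
    constructor
    · rintro (h | h)
      · right; exact_mod_cast h
      · left
        rw [hyk] at h
        have h2 : (2 : ℕ) ^ k = 2 ^ 1 := by exact_mod_cast h
        exact Nat.pow_right_injective le_rfl h2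
    · rintro (rfl | rfl)
      · right; rw [hyk]; norm_num
      · left; norm_num
end
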